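/- arXiv:2111.11855 — 3 statements merged into one kernel-verified Lean document; each statement's English description precedes it below -/
import Mathlib

section
/- If C(A) = (A + UAU*)/2 is a pinching of a square matrix A (U unitary), then δ(C(A)) ≺_w δ(A), and likewise for the anti-pinching L(A) = A − C(A) = (A − UAU*)/2 one has δ(L(A)) ≺_w δ(A). -/
open scoped InnerProductSpace ComplexOrder Matrix

/-- Singular values of a square complex matrix (in some fixed order). -/
noncomputable def singVals {n : ℕ} (A : Matrix (Fin n) (Fin n) ℂ) : Fin n → ℝ :=
  fun i => Real.sqrt ((Matrix.posSemidef_conjTranspose_mul_self A).1.eigenvalues i)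

/-- Sum of the `k` largest entries of a vector: supremum of sums over subsets of size `k`. -/
noncomputable def sumK {n : ℕ} (f : Fin n → ℝ) (k : ℕ) : ℝ :=
  sSup {x | ∃ s : Finset (Fin n), s.card = k ∧ x = ∑ i ∈ s, f i}

/-- The Ky-Fan `k`-norm: sum of the `k` largest singular values. -/
noncomputable def kyFan {n : ℕ} (A : Matrix (Fin n) (Fin n) ℂ) (k : ℕ) : ℝ :=
  sumK (singVals A) k

/-- The `k`-th discrepancy norm, via its minimal characterization. -/
noncomputable def discNorm {n : ℕ} (A : Matrix (Fin n) (Fin n) ℂ) (k : ℕ) : ℝ :=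
  sInf {x | ∃ α : ℂ, x = kyFan (A - α • 1) k}

/-- The vector of discrepancy values. -/
noncomputable def discVals {n : ℕ} (A : Matrix (Fin n) (Fin n) ℂ) : Fin n → ℝ :=
  fun i => discNorm A (i.1 + 1) - discNorm A i.1

/-- Weak majorization of vectors. -/
def WeakMaj {n : ℕ} (f g : Fin n → ℝ) : Prop :=
  ∀ k : ℕ, sumK f k ≤ sumK g k

/-- Decreasing rearrangement of a vector. -/
noncomputable def sortDesc {n : ℕ} (f : Fin n → ℝ) : Fin n → ℝ :=
  fun i => f (Tuple.sort f i.rev)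

namespace DiscAux

variable {n : ℕ}

def sumSet (f : Fin n → ℝ) (k : ℕ) : Set ℝ :=
  {x | ∃ s : Finset (Fin n), s.card = k ∧ x = ∑ i ∈ s, f i}

lemma sumK_eq (f : Fin n → ℝ) (k : ℕ) : sumK f k = sSup (sumSet f k) := rfl

lemma sumSet_finite (f : Fin n → ℝ) (k : ℕ) : (sumSet f k).Finite := by
  have h : sumSet f k ⊆ (fun s : Finset (Fin n) => ∑ i ∈ s, f i) '' Set.univ := by
    rintro x ⟨s, hs, rfl⟩; exact ⟨s, trivial, rfl⟩
  exact Set.Finite.subset (Set.Finite.image _ Set.finite_univ) h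

lemma sumSet_bddAbove (f : Fin n → ℝ) (k : ℕ) : BddAbove (sumSet f k) :=
  (sumSet_finite f k).bddAbove

lemma sumSet_nonempty (f : Fin n → ℝ) {k : ℕ} (hk : k ≤ n) : (sumSet f k).Nonempty := by
  obtain ⟨s, -, hs⟩ := Finset.exists_subset_card_eq (show k ≤ (Finset.univ : Finset (Fin n)).card by
    simpa using hk)
  exact ⟨∑ i ∈ s, f i, s, hs, rfl⟩

lemma sum_le_sumK (f : Fin n → ℝ) {k : ℕ} {s : Finset (Fin n)} (hs : s.card = k) :
    ∑ i ∈ s, f i ≤ sumK f k :=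
  le_csSup (sumSet_bddAbove f k) ⟨s, hs, rfl⟩

lemma sumK_le (f : Fin n → ℝ) {k : ℕ} (hk : k ≤ n) {c : ℝ}
    (h : ∀ s : Finset (Fin n), s.card = k → ∑ i ∈ s, f i ≤ c) : sumK f k ≤ c := by
  refine csSup_le (sumSet_nonempty f hk) ?_
  rintro x ⟨s, hs, rfl⟩; exact h s hs

lemma sumK_of_gt (f : Fin n → ℝ) {k : ℕ} (hk : n < k) : sumK f k = 0 := by
  have h : sumSet f k = ∅ := by
    ext x; simp only [sumSet, Set.mem_setOf_eq, Set.mem_empty_iff_false, iff_false]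
    rintro ⟨s, hs, -⟩
    exact absurd (hs ▸ (s.card_le_univ.trans_eq (by simp))) (not_le.2 hk)
  rw [sumK_eq, h, Real.sSup_empty]

lemma exists_sumK (f : Fin n → ℝ) {k : ℕ} (hk : k ≤ n) :
    ∃ s : Finset (Fin n), s.card = k ∧ sumK f k = ∑ i ∈ s, f i := by
  have := (sumSet_nonempty f hk).csSup_mem (sumSet_finite f k)
  obtain ⟨s, hs, h⟩ := this
  exact ⟨s, hs, h⟩

lemma sumK_zero (f : Fin n → ℝ) : sumK f 0 = 0 := by
  have h : sumSet f 0 = {0} := by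
    ext x
    simp only [sumSet, Set.mem_setOf_eq, Set.mem_singleton_iff, Finset.card_eq_zero]
    constructor
    · rintro ⟨s, rfl, rfl⟩; simp
    · rintro rfl; exact ⟨∅, rfl, by simp⟩
  rw [sumK_eq, h, csSup_singleton]

lemma sumK_nonneg {f : Fin n → ℝ} (hf : ∀ i, 0 ≤ f i) (k : ℕ) : 0 ≤ sumK f k := by
  rcases le_or_gt k n with hk | hk
  · obtain ⟨s, -, hs⟩ := Finset.exists_subset_card_eq (show k ≤ (Finset.univ : Finset (Fin n)).card by simpa using hk)
    exact (Finset.sum_nonneg fun i _ => hf i).trans (sum_le_sumK f hs)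
  · rw [sumK_of_gt f hk]

lemma sumK_mono {f : Fin n → ℝ} (hf : ∀ i, 0 ≤ f i) {k l : ℕ} (hkl : k ≤ l) (hl : l ≤ n) :
    sumK f k ≤ sumK f l := by
  refine sumK_le f (hkl.trans hl) fun s hs => ?_
  obtain ⟨t, hst, -, ht⟩ := Finset.exists_subsuperset_card_eq s.subset_univ
    (show s.card ≤ l by omega) (show l ≤ Finset.univ.card by simpa using hl)
  calc ∑ i ∈ s, f i ≤ ∑ i ∈ t, f i := Finset.sum_le_sum_of_subset_of_nonneg hst
        (fun i _ _ => hf i)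
    _ ≤ sumK f l := sum_le_sumK f ht

lemma sumK_concave (f : Fin n → ℝ) {k : ℕ} (hk : k + 2 ≤ n) :
    sumK f (k + 2) + sumK f k ≤ 2 * sumK f (k + 1) := by
  obtain ⟨s, hs, hsv⟩ := exists_sumK f hk
  obtain ⟨t, ht, htv⟩ := exists_sumK f (show k ≤ n by omega)
  have hsub : s ∩ t ⊆ s ∪ t := (Finset.inter_subset_left).trans Finset.subset_union_left
  have hcard : (s ∪ t).card + (s ∩ t).card = 2 * k + 2 := by
    rw [Finset.card_union_add_card_inter, hs, ht]; ring
  have h1 : (s ∩ t).card ≤ k + 1 := by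
    have := Finset.card_le_card (show s ∩ t ⊆ t from Finset.inter_subset_right); omega
  have h2 : k + 1 ≤ (s ∪ t).card := by
    have := Finset.card_le_card (show s ⊆ s ∪ t from Finset.subset_union_left); omega
  obtain ⟨u, hiu, hus, hu⟩ := Finset.exists_subsuperset_card_eq hsub h1 h2
  set w : Finset (Fin n) := (s ∪ t) \ u ∪ s ∩ t with hw
  have hdisj : Disjoint ((s ∪ t) \ u) (s ∩ t) :=
    Finset.disjoint_left.2 fun a ha hb => (Finset.mem_sdiff.1 ha).2 (hiu hb)
  have hwcard : w.card = k + 1 := by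
    rw [hw, Finset.card_union_of_disjoint hdisj, Finset.card_sdiff_of_subset hus]; omega
  have hsum : ∑ i ∈ s, f i + ∑ i ∈ t, f i = ∑ i ∈ u, f i + ∑ i ∈ w, f i := by
    rw [hw, Finset.sum_union hdisj, ← Finset.sum_union_inter, ← add_assoc]
    congr 1
    rw [add_comm, Finset.sum_sdiff hus]
  have := add_le_add (sum_le_sumK f hu) (sum_le_sumK f hwcard)
  rw [← hsum, ← hsv, ← htv] at this
  linarith

/-- existence of a "top" subset of size k within J -/
lemma exists_top (f : Fin n → ℝ) (k : ℕ) :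
    ∀ J : Finset (Fin n), ∃ T ⊆ J, T.card = min k J.card ∧
      ∀ a ∈ J \ T, ∀ b ∈ T, f a ≤ f b := by
  induction k with
  | zero => intro J; exact ⟨∅, Finset.empty_subset _, by simp, by simp⟩
  | succ k ih =>
    intro J
    rcases J.eq_empty_or_nonempty with rfl | hJ
    · exact ⟨∅, Finset.empty_subset _, by simp, by simp⟩
    obtain ⟨b₀, hb₀, hmax⟩ := J.exists_max_image f hJ
    obtain ⟨T', hT'sub, hT'card, hT'⟩ := ih (J.erase b₀)
    refine ⟨insert b₀ T', ?_, ?_, ?_⟩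
    · exact Finset.insert_subset hb₀ (hT'sub.trans (J.erase_subset b₀))
    · have hb₀T' : b₀ ∉ T' := fun h => (Finset.mem_erase.1 (hT'sub h)).1 rfl
      rw [Finset.card_insert_of_notMem hb₀T', hT'card,
        Finset.card_erase_of_mem hb₀]
      have : 1 ≤ J.card := Finset.card_pos.2 hJ
      omega
    · intro a ha b hb
      have haJ : a ∈ J := (Finset.mem_sdiff.1 ha).1
      have haT : a ∉ insert b₀ T' := (Finset.mem_sdiff.1 ha).2
      rcases Finset.mem_insert.1 hb with rfl | hb
      · exact hmax a haJ
      · refine hT' a ?_ b hb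
        rw [Finset.mem_sdiff]
        refine ⟨Finset.mem_erase.2 ⟨fun h => haT (h ▸ Finset.mem_insert_self _ _), haJ⟩, ?_⟩
        exact fun h => haT (Finset.mem_insert_of_mem h)

lemma substochastic_bound {f : Fin n → ℝ} (hf : ∀ i, 0 ≤ f i) {d : Fin n → ℝ}
    (J : Finset (Fin n)) (hd0 : ∀ j ∈ J, 0 ≤ d j) (hd1 : ∀ j ∈ J, d j ≤ 1)
    {k : ℕ} (hdk : ∑ j ∈ J, d j ≤ k) (hk : k ≤ n) :
    ∑ j ∈ J, f j * d j ≤ sumK f k := by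
  rcases Nat.eq_zero_or_pos k with rfl | hkpos
  · rw [sumK_zero]
    have h0 : ∑ j ∈ J, d j = 0 :=
      le_antisymm (by exact_mod_cast hdk) (Finset.sum_nonneg hd0)
    have hz := (Finset.sum_eq_zero_iff_of_nonneg hd0).1 h0
    exact le_of_eq (Finset.sum_eq_zero fun j hj => by rw [hz j hj, mul_zero])
  rcases le_or_gt J.card k with hJk | hJk
  · calc ∑ j ∈ J, f j * d j ≤ ∑ j ∈ J, f j := by
          refine Finset.sum_le_sum fun j hj => ?_
          have h1 := hf j; have h2 := hd1 j hj; have h3 := hd0 j hj; nlinarith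
      _ ≤ sumK f J.card := sum_le_sumK f rfl
      _ ≤ sumK f k := sumK_mono hf hJk hk
  · obtain ⟨T, hTJ, hTcard, hT⟩ := exists_top f k J
    rw [min_eq_left hJk.le] at hTcard
    have hTne : T.Nonempty := Finset.card_pos.1 (by omega)
    obtain ⟨b0, hb0T, hmin⟩ := T.exists_min_image f hTne
    set m := f b0 with hm
    have hm0 : 0 ≤ m := hf b0
    have hsplit : ∑ j ∈ J, f j * d j = (∑ j ∈ J \ T, f j * d j) + ∑ j ∈ T, f j * d j :=
      (Finset.sum_sdiff hTJ).symm
    have hdsplit : (∑ j ∈ J \ T, d j) + ∑ j ∈ T, d j = ∑ j ∈ J, d j :=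
      Finset.sum_sdiff hTJ
    have hb1 : ∑ j ∈ J \ T, f j * d j ≤ m * ∑ j ∈ J \ T, d j := by
      rw [Finset.mul_sum]
      refine Finset.sum_le_sum fun j hj => ?_
      have hfj : f j ≤ m := hT j hj b0 hb0T
      have hdj : 0 ≤ d j := hd0 j ((Finset.mem_sdiff.1 hj).1)
      nlinarith
    have hb2 : m * ∑ j ∈ J \ T, d j ≤ m * ((k : ℝ) - ∑ j ∈ T, d j) := by
      have : ∑ j ∈ J \ T, d j ≤ (k : ℝ) - ∑ j ∈ T, d j := by linarith
      nlinarith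
    have hb3 : (∑ j ∈ T, f j * d j) + m * ((k : ℝ) - ∑ j ∈ T, d j)
        = ∑ j ∈ T, (f j * d j + m * (1 - d j)) := by
      have h1 : ∑ j ∈ T, m * (1 - d j) = m * ((k : ℝ) - ∑ j ∈ T, d j) := by
        simp only [mul_sub, mul_one, Finset.sum_sub_distrib, Finset.sum_const, hTcard,
          ← Finset.mul_sum, nsmul_eq_mul]
        ring
      rw [Finset.sum_add_distrib, h1]
    have hb4 : ∑ j ∈ T, (f j * d j + m * (1 - d j)) ≤ ∑ j ∈ T, f j := by
      refine Finset.sum_le_sum fun j hj => ?_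
      have h1 : m ≤ f j := hmin j hj
      have h2 : d j ≤ 1 := hd1 j (hTJ hj)
      have h3 : 0 ≤ d j := hd0 j (hTJ hj)
      nlinarith
    have hb5 : ∑ j ∈ T, f j ≤ sumK f k := sum_le_sumK f hTcard
    linarith

end DiscAux

namespace DiscAux

variable {n : ℕ}

def discSet (A : Matrix (Fin n) (Fin n) ℂ) (k : ℕ) : Set ℝ :=
  {x | ∃ α : ℂ, x = kyFan (A - α • 1) k}

lemma discNorm_eq (A : Matrix (Fin n) (Fin n) ℂ) (k : ℕ) :
    discNorm A k = sInf (discSet A k) := rfl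

lemma singVals_nonneg (A : Matrix (Fin n) (Fin n) ℂ) (i : Fin n) : 0 ≤ singVals A i :=
  Real.sqrt_nonneg _

lemma kyFan_nonneg (A : Matrix (Fin n) (Fin n) ℂ) (k : ℕ) : 0 ≤ kyFan A k :=
  sumK_nonneg (singVals_nonneg A) k

lemma discSet_nonempty (A : Matrix (Fin n) (Fin n) ℂ) (k : ℕ) : (discSet A k).Nonempty :=
  ⟨kyFan (A - (0:ℂ) • 1) k, 0, rfl⟩

lemma discSet_bddBelow (A : Matrix (Fin n) (Fin n) ℂ) (k : ℕ) : BddBelow (discSet A k) :=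
  ⟨0, by rintro x ⟨α, rfl⟩; exact kyFan_nonneg _ _⟩

lemma discNorm_le (A : Matrix (Fin n) (Fin n) ℂ) (α : ℂ) (k : ℕ) :
    discNorm A k ≤ kyFan (A - α • 1) k :=
  csInf_le (discSet_bddBelow A k) ⟨α, rfl⟩

lemma kyFan_zero (A : Matrix (Fin n) (Fin n) ℂ) : kyFan A 0 = 0 := sumK_zero _

lemma discNorm_zero (A : Matrix (Fin n) (Fin n) ℂ) : discNorm A 0 = 0 := by
  have h : discSet A 0 = {0} := by
    ext x
    simp [discSet, kyFan_zero]
  rw [discNorm_eq, h, csInf_singleton]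

lemma discNorm_concave (A : Matrix (Fin n) (Fin n) ℂ) {k : ℕ} (hk : k + 2 ≤ n) :
    discNorm A (k+2) + discNorm A k ≤ 2 * discNorm A (k+1) := by
  have key : ∀ x ∈ discSet A (k+1),
      (discNorm A (k+2) + discNorm A k) / 2 ≤ x := by
    rintro x ⟨α, rfl⟩
    have h1 := discNorm_le A α (k+2)
    have h2 := discNorm_le A α k
    have h3 := sumK_concave (singVals (A - α • 1)) hk
    have e1 : kyFan (A - α • 1) (k+2) = sumK (singVals (A - α • 1)) (k+2) := rfl
    have e2 : kyFan (A - α • 1) k = sumK (singVals (A - α • 1)) k := rfl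
    have e3 : kyFan (A - α • 1) (k+1) = sumK (singVals (A - α • 1)) (k+1) := rfl
    linarith
  have := le_csInf (discSet_nonempty A (k+1)) key
  rw [← discNorm_eq] at this
  linarith

lemma delta_antitone (A : Matrix (Fin n) (Fin n) ℂ) {i j : ℕ} (hij : i ≤ j) (hj : j + 1 ≤ n) :
    discNorm A (j+1) - discNorm A j ≤ discNorm A (i+1) - discNorm A i := by
  induction j with
  | zero =>
    have h0 : i = 0 := Nat.le_zero.1 hij
    subst h0; exact le_rfl
  | succ j ih =>
    have step : discNorm A (j+2) - discNorm A (j+1) ≤ discNorm A (j+1) - discNorm A j := by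
      have := discNorm_concave A (show j + 2 ≤ n from hj)
      linarith
    rcases Nat.lt_or_ge i (j+1) with hi | hi
    · exact step.trans (ih (by omega) (by omega))
    · have : i = j + 1 := by omega
      subst this; exact le_rfl

lemma sum_discVals_le (A : Matrix (Fin n) (Fin n) ℂ) :
    ∀ k : ℕ, ∀ s : Finset (Fin n), s.card = k → ∑ i ∈ s, discVals A i ≤ discNorm A k := by
  intro k
  induction k with
  | zero =>
    intro s hs
    rw [Finset.card_eq_zero] at hs
    subst hs
    simp [discNorm_zero]
  | succ k ih =>
    intro s hs
    have hne : s.Nonempty := Finset.card_pos.1 (by omega)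
    set m := s.max' hne with hm
    have hmem : m ∈ s := s.max'_mem hne
    have hsub : s ⊆ Finset.Iic m := fun i hi => Finset.mem_Iic.2 (s.le_max' i hi)
    have hkm : k ≤ m.1 := by
      have h1 := Finset.card_le_card hsub
      have h2 := Fin.card_Iic (b := m)
      omega
    have hδ : discVals A m ≤ discNorm A (k+1) - discNorm A k := by
      have := delta_antitone A hkm (show m.1 + 1 ≤ n from m.2)
      exact this
    have hih := ih (s.erase m) (by rw [Finset.card_erase_of_mem hmem, hs]; omega)
    have hsum : ∑ i ∈ s.erase m, discVals A i + discVals A m = ∑ i ∈ s, discVals A i :=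
      Finset.sum_erase_add s _ hmem
    linarith

lemma discNorm_le_sumK (A : Matrix (Fin n) (Fin n) ℂ) {k : ℕ} (hk : k ≤ n) :
    discNorm A k ≤ sumK (discVals A) k := by
  have htel : ∑ i ∈ Finset.range k, (discNorm A (i+1) - discNorm A i) = discNorm A k := by
    rw [Finset.sum_range_sub (fun i => discNorm A i), discNorm_zero, sub_zero]
  set s : Finset (Fin n) := Finset.univ.map (Fin.castLEOrderEmb hk).toEmbedding with hsdef
  have hcard : s.card = k := by simp [hsdef]
  have hsum : ∑ i ∈ s, discVals A i = ∑ i ∈ Finset.range k, (discNorm A (i+1) - discNorm A i) := by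
    rw [hsdef, Finset.sum_map, ← Fin.sum_univ_eq_sum_range]
    rfl
  calc discNorm A k = ∑ i ∈ s, discVals A i := by rw [hsum, htel]
    _ ≤ sumK (discVals A) k := sum_le_sumK _ hcard

lemma weakMaj_of_discNorm_le {A B : Matrix (Fin n) (Fin n) ℂ}
    (h : ∀ k : ℕ, k ≤ n → discNorm B k ≤ discNorm A k) :
    WeakMaj (discVals B) (discVals A) := by
  intro k
  rcases le_or_gt k n with hk | hk
  · refine sumK_le _ hk fun s hs => ?_
    calc ∑ i ∈ s, discVals B i ≤ discNorm B k := sum_discVals_le B k s hs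
      _ ≤ discNorm A k := h k hk
      _ ≤ sumK (discVals A) k := discNorm_le_sumK A hk
  · rw [sumK_of_gt _ hk, sumK_of_gt _ hk]

end DiscAux

namespace DiscAux

noncomputable section
variable {n : ℕ}

open Matrix in
def ip (x y : Fin n → ℂ) : ℂ := dotProduct (star x) y

lemma ip_add_right (x y z : Fin n → ℂ) : ip x (y + z) = ip x y + ip x z :=
  dotProduct_add _ _ _

lemma ip_smul_right (c : ℂ) (x y : Fin n → ℂ) : ip x (c • y) = c * ip x y := by
  rw [ip, dotProduct_smul, smul_eq_mul]; rfl

lemma ip_smul_left (c : ℂ) (x y : Fin n → ℂ) : ip (c • x) y = star c * ip x y := by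
  rw [ip, star_smul, smul_dotProduct, smul_eq_mul]; rfl

lemma ip_neg_left (x y : Fin n → ℂ) : ip (-x) y = - ip x y := by
  rw [ip, star_neg, neg_dotProduct]; rfl

lemma ip_zero_left (y : Fin n → ℂ) : ip 0 y = 0 := by
  rw [ip, star_zero, zero_dotProduct]

lemma ip_conj (x y : Fin n → ℂ) : ip x y = star (ip y x) := by
  simp only [ip, dotProduct, star_sum, star_mul, star_star, Pi.star_apply]

lemma ip_sum_right (t : Finset (Fin n)) (x : Fin n → ℂ) (g : Fin n → Fin n → ℂ) :
    ip x (∑ j ∈ t, g j) = ∑ j ∈ t, ip x (g j) := by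
  simp only [ip, dotProduct, Finset.sum_apply, Finset.mul_sum]
  exact Finset.sum_comm

lemma ip_eq_inner (x y : Fin n → ℂ) :
    ip x y = (inner ℂ ((WithLp.equiv 2 (Fin n → ℂ)).symm x)
      ((WithLp.equiv 2 (Fin n → ℂ)).symm y) : ℂ) := by
  simp [ip, dotProduct, PiLp.inner_apply, mul_comm]

lemma ip_self_eq_zero {x : Fin n → ℂ} (h : ip x x = 0) : x = 0 := by
  rw [ip_eq_inner] at h
  exact congrArg (WithLp.equiv 2 (Fin n → ℂ)) (inner_self_eq_zero.1 h)

/-- adjoint relation -/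
lemma ip_mulVec_left (M : Matrix (Fin n) (Fin n) ℂ) (x y : Fin n → ℂ) :
    ip (M *ᵥ x) y = ip x (Mᴴ *ᵥ y) := by
  rw [ip, Matrix.star_mulVec, ip, Matrix.dotProduct_mulVec]

lemma ip_mulVec_mulVec (M : Matrix (Fin n) (Fin n) ℂ) (x y : Fin n → ℂ) :
    ip (M *ᵥ x) (M *ᵥ y) = ip x ((Mᴴ * M) *ᵥ y) := by
  rw [ip_mulVec_left, Matrix.mulVec_mulVec]

/-- eigenvector functions of `Mᴴ * M` -/
def W (M : Matrix (Fin n) (Fin n) ℂ) (j : Fin n) : Fin n → ℂ :=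
  ⇑((Matrix.posSemidef_conjTranspose_mul_self M).1.eigenvectorBasis j)

lemma ip_W_W (M : Matrix (Fin n) (Fin n) ℂ) (i j : Fin n) :
    ip (W M i) (W M j) = if i = j then 1 else 0 := by
  have h := (Matrix.posSemidef_conjTranspose_mul_self M).1.eigenvectorBasis.orthonormal
  rw [orthonormal_iff_ite] at h
  rw [ip_eq_inner]; exact h i j

lemma eigv_nonneg (M : Matrix (Fin n) (Fin n) ℂ) (j : Fin n) :
    0 ≤ (Matrix.posSemidef_conjTranspose_mul_self M).1.eigenvalues j :=
  (Matrix.posSemidef_conjTranspose_mul_self M).eigenvalues_nonneg j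

lemma sq_singVals (M : Matrix (Fin n) (Fin n) ℂ) (j : Fin n) :
    singVals M j ^ 2 = (Matrix.posSemidef_conjTranspose_mul_self M).1.eigenvalues j :=
  Real.sq_sqrt (eigv_nonneg M j)

lemma H_mulVec_W (M : Matrix (Fin n) (Fin n) ℂ) (j : Fin n) :
    (Mᴴ * M) *ᵥ W M j =
      (((Matrix.posSemidef_conjTranspose_mul_self M).1.eigenvalues j : ℝ) : ℂ) • W M j := by
  have h := (Matrix.posSemidef_conjTranspose_mul_self M).1.mulVec_eigenvectorBasis j
  rw [show ((Matrix.posSemidef_conjTranspose_mul_self M).1.eigenvalues j) •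
      ⇑((Matrix.posSemidef_conjTranspose_mul_self M).1.eigenvectorBasis j)
    = (((Matrix.posSemidef_conjTranspose_mul_self M).1.eigenvalues j : ℝ) : ℂ) •
      ⇑((Matrix.posSemidef_conjTranspose_mul_self M).1.eigenvectorBasis j) from
    funext fun i => by simp [Complex.real_smul]] at h
  exact h

lemma ip_MW_MW (M : Matrix (Fin n) (Fin n) ℂ) (i j : Fin n) :
    ip (M *ᵥ W M i) (M *ᵥ W M j)
      = ((singVals M j ^ 2 : ℝ) : ℂ) * (if i = j then 1 else 0) := by
  rw [ip_mulVec_mulVec, H_mulVec_W, ip_smul_right, ip_W_W, sq_singVals]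

lemma MW_eq_zero (M : Matrix (Fin n) (Fin n) ℂ) {j : Fin n} (hj : singVals M j = 0) :
    M *ᵥ W M j = 0 := by
  apply ip_self_eq_zero
  rw [ip_MW_MW, if_pos rfl, hj]
  norm_num

/-- normalized left singular vectors -/
def uvec (M : Matrix (Fin n) (Fin n) ℂ) (j : Fin n) : Fin n → ℂ :=
  (((singVals M j)⁻¹ : ℝ) : ℂ) • (M *ᵥ W M j)

lemma MW_eq (M : Matrix (Fin n) (Fin n) ℂ) (j : Fin n) :
    M *ᵥ W M j = ((singVals M j : ℝ) : ℂ) • uvec M j := by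
  rcases eq_or_ne (singVals M j) 0 with hj | hj
  · rw [MW_eq_zero M hj, hj]
    simp
  · rw [uvec, smul_smul, ← Complex.ofReal_mul, mul_inv_cancel₀ hj]
    simp

lemma ip_u_u (M : Matrix (Fin n) (Fin n) ℂ) {i j : Fin n}
    (hi : singVals M i ≠ 0) (hj : singVals M j ≠ 0) :
    ip (uvec M i) (uvec M j) = if i = j then 1 else 0 := by
  rw [uvec, uvec, ip_smul_left, ip_smul_right, ip_MW_MW]
  rcases eq_or_ne i j with rfl | hij
  · simp only [if_pos rfl, mul_one]
    rw [show star ((((singVals M i)⁻¹ : ℝ)) : ℂ) = (((singVals M i)⁻¹ : ℝ) : ℂ) by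
      rw [Complex.star_def, Complex.conj_ofReal]]
    norm_cast
    rw [pow_two]
    field_simp
  · simp [if_neg hij]

/-- eigenbasis expansion of `M *ᵥ y` -/
lemma mulVec_expand (M : Matrix (Fin n) (Fin n) ℂ) (y : Fin n → ℂ) :
    M *ᵥ y = ∑ j, (ip (W M j) y) • (M *ᵥ W M j) := by
  have hb := (Matrix.posSemidef_conjTranspose_mul_self M).1.eigenvectorBasis.sum_repr'
    ((WithLp.equiv 2 (Fin n → ℂ)).symm y)
  have hy : y = ∑ j, (ip (W M j) y) • W M j := by
    have := congrArg (WithLp.equiv 2 (Fin n → ℂ)) hb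
    simp only [WithLp.equiv_apply, WithLp.equiv_symm_apply, WithLp.ofLp_sum, WithLp.ofLp_smul] at this
    conv_lhs => rw [← this]
    exact Finset.sum_congr rfl fun j _ => by rw [ip_eq_inner]; rfl
  calc M *ᵥ y = M *ᵥ (∑ j, (ip (W M j) y) • W M j) := by rw [← hy]
    _ = ∑ j, (ip (W M j) y) • (M *ᵥ W M j) := by
        rw [show ∀ v, M *ᵥ v = M.mulVecLin v from fun _ => rfl]
        rw [map_sum]
        exact Finset.sum_congr rfl fun j _ => by rw [map_smul]; rfl

lemma ip_mulVec_expand (M : Matrix (Fin n) (Fin n) ℂ) (x y : Fin n → ℂ) :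
    ip x (M *ᵥ y) = ∑ j, ((singVals M j : ℝ) : ℂ) * (star (ip (uvec M j) x) * ip (W M j) y) := by
  rw [mulVec_expand M y, ip_sum_right]
  refine Finset.sum_congr rfl fun j _ => ?_
  rw [ip_smul_right, MW_eq, ip_smul_right, ← ip_conj]
  ring

end
end DiscAux

namespace DiscAux
noncomputable section
variable {n : ℕ}

def Frame (s : Finset (Fin n)) (x y : Fin n → Fin n → ℂ) : Prop :=
  ∀ i ∈ s, ∀ j ∈ s, ip (x i) (x j) + ip (y i) (y j) = if i = j then 1 else 0

def pvec (a b : Fin n → ℂ) : EuclideanSpace ℂ (Fin n ⊕ Fin n) :=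
  (WithLp.equiv 2 (Fin n ⊕ Fin n → ℂ)).symm (Sum.elim a b)

lemma inner_pvec (a b c d : Fin n → ℂ) :
    (inner ℂ (pvec a b) (pvec c d) : ℂ) = ip a c + ip b d := by
  simp [pvec, PiLp.inner_apply, dotProduct, Fintype.sum_sum_type, ip, mul_comm]

lemma re_ineq (a b : ℂ) : 2 * (star a * b).re ≤ ‖a + b‖ ^ 2 / 2 := by
  have h1 : (star a * b).re = a.re * b.re + a.im * b.im := by
    simp [Complex.mul_re, Complex.star_def]
  have h2 : ‖a + b‖ ^ 2 = (a.re + b.re) ^ 2 + (a.im + b.im) ^ 2 := by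
    rw [Complex.sq_norm, Complex.normSq_apply]
    simp only [Complex.add_re, Complex.add_im]
    ring
  nlinarith [sq_nonneg (a.re - b.re), sq_nonneg (a.im - b.im)]

lemma frame_sum_le (M : Matrix (Fin n) (Fin n) ℂ) {s : Finset (Fin n)}
    {x y : Fin n → Fin n → ℂ} (hF : Frame s x y) :
    ∑ i ∈ s, 2 * (ip (x i) (M *ᵥ y i)).re ≤ kyFan M s.card := by
  classical
  set σ : Fin n → ℝ := singVals M with hσ
  set J : Finset (Fin n) := Finset.univ.filter (fun j => σ j ≠ 0) with hJdef
  set c : ℂ := (((Real.sqrt 2)⁻¹ : ℝ) : ℂ) with hc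
  have hcstar : (starRingEnd ℂ) c = c := by rw [hc, Complex.conj_ofReal]
  have hcc : c * c = (1/2 : ℂ) := by
    rw [hc, ← Complex.ofReal_mul, ← mul_inv, Real.mul_self_sqrt (by norm_num : (0:ℝ) ≤ 2)]
    norm_num
  have hcnorm : ‖c‖ ^ 2 = 1 / 2 := by
    rw [hc, Complex.norm_real, Real.norm_eq_abs, ← abs_pow]
    rw [show ((Real.sqrt 2)⁻¹) ^ 2 = ((Real.sqrt 2) * (Real.sqrt 2))⁻¹ by
      rw [pow_two, mul_inv]]
    rw [Real.mul_self_sqrt (by norm_num : (0:ℝ) ≤ 2)]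
    norm_num
  set V : ↥s → EuclideanSpace ℂ (Fin n ⊕ Fin n) := fun i => pvec (x i) (y i) with hV
  set P : Fin n → EuclideanSpace ℂ (Fin n ⊕ Fin n) :=
    fun j => c • pvec (uvec M j) (W M j) with hP
  have hVo : Orthonormal ℂ V := by
    rw [orthonormal_iff_ite]
    intro i j
    rw [hV]
    dsimp only
    rw [inner_pvec, hF i i.2 j j.2]
    by_cases h : (i : Fin n) = (j : Fin n)
    · rw [if_pos h, if_pos (Subtype.ext h)]
    · rw [if_neg h, if_neg (fun hh => h (congrArg Subtype.val hh))]
  have hPo : Orthonormal ℂ (fun j : ↥J => P j) := by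
    rw [orthonormal_iff_ite]
    intro i j
    have hi : σ (i : Fin n) ≠ 0 := (Finset.mem_filter.1 i.2).2
    have hj : σ (j : Fin n) ≠ 0 := (Finset.mem_filter.1 j.2).2
    rw [hP]
    dsimp only
    rw [inner_smul_left, inner_smul_right, inner_pvec, ip_u_u M hi hj, ip_W_W,
      hcstar, ← mul_assoc, hcc]
    by_cases h : (i : Fin n) = (j : Fin n)
    · rw [if_pos h, if_pos (Subtype.ext h)]; norm_num
    · rw [if_neg h, if_neg (fun hh => h (congrArg Subtype.val hh))]; norm_num
  set d : Fin n → ℝ := fun j => ∑ i ∈ s, ‖(inner ℂ (P j) (pvec (x i) (y i)) : ℂ)‖ ^ 2 with hd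
  have hd0 : ∀ j ∈ J, 0 ≤ d j := fun j _ => Finset.sum_nonneg fun i _ => by positivity
  have hd1 : ∀ j ∈ J, d j ≤ 1 := by
    intro j hj
    have hb := hVo.sum_inner_products_le (P j) (s := (Finset.univ : Finset ↥s))
    have hnorm : ‖P j‖ = 1 := hPo.1 ⟨j, hj⟩
    have hswap : d j = ∑ i : ↥s, ‖(inner ℂ (V i) (P j) : ℂ)‖ ^ 2 := by
      rw [hd]
      dsimp only
      rw [← Finset.sum_coe_sort s (fun i => ‖(inner ℂ (P j) (pvec (x i) (y i)) : ℂ)‖ ^ 2)]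
      exact Finset.sum_congr rfl fun i _ => by rw [norm_inner_symm]
    rw [hswap]
    calc ∑ i : ↥s, ‖(inner ℂ (V i) (P j) : ℂ)‖ ^ 2 ≤ ‖P j‖ ^ 2 := hb
      _ = 1 := by rw [hnorm]; norm_num
  have hdk : ∑ j ∈ J, d j ≤ (s.card : ℝ) := by
    have hswap : ∑ j ∈ J, d j = ∑ i : ↥s, ∑ j ∈ J, ‖(inner ℂ (P j) (V i) : ℂ)‖ ^ 2 := by
      have h1 : ∀ j, d j = ∑ i : ↥s, ‖(inner ℂ (P j) (V i) : ℂ)‖ ^ 2 := fun j =>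
        (Finset.sum_coe_sort s (fun i => ‖(inner ℂ (P j) (pvec (x i) (y i)) : ℂ)‖ ^ 2)).symm
      rw [Finset.sum_congr rfl fun j _ => h1 j]
      exact Finset.sum_comm
    rw [hswap]
    have hbound : ∀ i : ↥s, ∑ j ∈ J, ‖(inner ℂ (P j) (V i) : ℂ)‖ ^ 2 ≤ 1 := by
      intro i
      have hb := hPo.sum_inner_products_le (V i) (s := (Finset.univ : Finset ↥J))
      have : ∑ j ∈ J, ‖(inner ℂ (P j) (V i) : ℂ)‖ ^ 2
          = ∑ j : ↥J, ‖(inner ℂ (P (j : Fin n)) (V i) : ℂ)‖ ^ 2 :=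
        (Finset.sum_coe_sort J (fun j => ‖(inner ℂ (P j) (V i) : ℂ)‖ ^ 2)).symm
      rw [this]
      calc ∑ j : ↥J, ‖(inner ℂ (P (j : Fin n)) (V i) : ℂ)‖ ^ 2 ≤ ‖V i‖ ^ 2 :=
            hb
        _ = 1 := by rw [hVo.1 i]; norm_num
    calc ∑ i : ↥s, ∑ j ∈ J, ‖(inner ℂ (P j) (V i) : ℂ)‖ ^ 2 ≤ ∑ _i : ↥s, (1:ℝ) :=
          Finset.sum_le_sum fun i _ => hbound i
      _ = (s.card : ℝ) := by simp [Fintype.card_coe]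
  set cf : Fin n → ℝ :=
    fun j => ∑ i ∈ s, 2 * (star (ip (uvec M j) (x i)) * ip (W M j) (y i)).re with hcf
  have hS : ∑ i ∈ s, 2 * (ip (x i) (M *ᵥ y i)).re = ∑ j, σ j * cf j := by
    have key : ∀ i ∈ s, 2 * (ip (x i) (M *ᵥ y i)).re
        = ∑ j, σ j * (2 * (star (ip (uvec M j) (x i)) * ip (W M j) (y i)).re) := by
      intro i _
      rw [ip_mulVec_expand, Complex.re_sum, Finset.mul_sum]
      exact Finset.sum_congr rfl fun j _ => by rw [Complex.re_ofReal_mul]; ring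
    rw [Finset.sum_congr rfl key, Finset.sum_comm]
    exact Finset.sum_congr rfl fun j _ => by rw [hcf, Finset.mul_sum]
  have hJres : ∑ j, σ j * cf j = ∑ j ∈ J, σ j * cf j := by
    symm
    apply Finset.sum_subset (Finset.subset_univ J)
    intro j _ hj
    have h0 : σ j = 0 := by
      by_contra h
      exact hj (Finset.mem_filter.2 ⟨Finset.mem_univ _, h⟩)
    rw [h0, zero_mul]
  have hcd : ∀ j ∈ J, cf j ≤ d j := by
    intro j _
    rw [hcf, hd]
    dsimp only
    refine Finset.sum_le_sum fun i _ => ?_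
    have hx : (inner ℂ (P j) (pvec (x i) (y i)) : ℂ)
        = c * (ip (uvec M j) (x i) + ip (W M j) (y i)) := by
      rw [hP]
      dsimp only
      rw [inner_smul_left, inner_pvec, hcstar]
    have hn : ‖(inner ℂ (P j) (pvec (x i) (y i)) : ℂ)‖ ^ 2
        = (1/2) * ‖ip (uvec M j) (x i) + ip (W M j) (y i)‖ ^ 2 := by
      rw [hx, norm_mul, mul_pow, hcnorm]
    rw [hn]
    have := re_ineq (ip (uvec M j) (x i)) (ip (W M j) (y i))
    linarith
  have hcard : s.card ≤ n := by
    have := Finset.card_le_univ s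
    simpa using this
  calc ∑ i ∈ s, 2 * (ip (x i) (M *ᵥ y i)).re = ∑ j ∈ J, σ j * cf j := by rw [hS, hJres]
    _ ≤ ∑ j ∈ J, σ j * d j := Finset.sum_le_sum fun j hj => by
        have h1 : 0 ≤ σ j := singVals_nonneg M j
        have h2 := hcd j hj
        nlinarith
    _ ≤ sumK σ s.card := substochastic_bound (singVals_nonneg M) J hd0 hd1 hdk hcard
    _ = kyFan M s.card := rfl

end
end DiscAux

namespace DiscAux
noncomputable section
variable {n : ℕ}

lemma ip_zero_right (x : Fin n → ℂ) : ip x 0 = 0 := by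
  rw [ip]; exact dotProduct_zero _

lemma exists_frame (M : Matrix (Fin n) (Fin n) ℂ) {k : ℕ} (hk : k ≤ n) :
    ∃ (s : Finset (Fin n)) (x y : Fin n → Fin n → ℂ), s.card = k ∧ Frame s x y ∧
      ∑ i ∈ s, 2 * (ip (x i) (M *ᵥ y i)).re = kyFan M k := by
  obtain ⟨s, hs, hsv⟩ := exists_sumK (singVals M) hk
  set c : ℂ := (((Real.sqrt 2)⁻¹ : ℝ) : ℂ) with hc
  have hcstar : (starRingEnd ℂ) c = c := by rw [hc, Complex.conj_ofReal]
  have hcstar2 : star c = c := by rw [Complex.star_def]; exact hcstar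
  have hcc : c * c = (1/2 : ℂ) := by
    rw [hc, ← Complex.ofReal_mul, ← mul_inv, Real.mul_self_sqrt (by norm_num : (0:ℝ) ≤ 2)]
    norm_num
  refine ⟨s, fun i => if singVals M i = 0 then 0 else c • uvec M i,
    fun i => if singVals M i = 0 then W M i else c • W M i, hs, ?_, ?_⟩
  · intro i _ j _
    beta_reduce
    by_cases hi : singVals M i = 0 <;> by_cases hj : singVals M j = 0
    · rw [if_pos hi, if_pos hj, if_pos hi, if_pos hj, ip_zero_left, zero_add, ip_W_W]
    · have hij : i ≠ j := fun h => hj (h ▸ hi)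
      rw [if_pos hi, if_neg hj, if_pos hi, if_neg hj, ip_zero_left, zero_add,
        ip_smul_right, ip_W_W, if_neg hij]
      exact mul_zero c
    · have hij : i ≠ j := fun h => hi (h ▸ hj)
      rw [if_neg hi, if_pos hj, if_neg hi, if_pos hj, ip_zero_right,
        ip_smul_left, ip_W_W, if_neg hij]
      simp
    · rw [if_neg hi, if_neg hj, if_neg hi, if_neg hj, ip_smul_left, ip_smul_right,
        ip_smul_left, ip_smul_right, ip_u_u M hi hj, ip_W_W, hcstar2,
        ← mul_assoc, hcc, ← mul_add]
      by_cases h : i = j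
      · rw [if_pos h]; norm_num
      · rw [if_neg h]; norm_num
  · have hterm : ∀ i ∈ s, 2 * (ip ((if singVals M i = 0 then 0 else c • uvec M i))
        (M *ᵥ (if singVals M i = 0 then W M i else c • W M i))).re = singVals M i := by
      intro i _
      by_cases hi : singVals M i = 0
      · rw [if_pos hi, if_pos hi, ip_zero_left, hi]
        simp
      · rw [if_neg hi, if_neg hi, Matrix.mulVec_smul, ip_smul_left, ip_smul_right,
          MW_eq, ip_smul_right, ip_u_u M hi hi, if_pos rfl, mul_one, hcstar2,
          ← mul_assoc, hcc]
        have : ((1:ℂ)/2 * ((singVals M i : ℝ) : ℂ)).re = singVals M i / 2 := by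
          rw [show ((1:ℂ)/2) = (((1:ℝ)/2 : ℝ) : ℂ) by norm_num, Complex.re_ofReal_mul,
            Complex.ofReal_re]
          ring
        rw [this]
        ring
    rw [Finset.sum_congr rfl hterm, ← hsv]
    rfl

lemma huni_ip (U : Matrix (Fin n) (Fin n) ℂ) (hUU : U * Uᴴ = 1) (a b : Fin n → ℂ) :
    ip (Uᴴ *ᵥ a) (Uᴴ *ᵥ b) = ip a b := by
  rw [ip_mulVec_mulVec, Matrix.conjTranspose_conjTranspose, hUU, Matrix.one_mulVec]

lemma ip_U_right (U : Matrix (Fin n) (Fin n) ℂ) (x z : Fin n → ℂ) :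
    ip x (U *ᵥ z) = ip (Uᴴ *ᵥ x) z := by
  rw [ip_mulVec_left, Matrix.conjTranspose_conjTranspose]

lemma kyFan_sign_le (U : Matrix (Fin n) (Fin n) ℂ) (hUU : U * Uᴴ = 1)
    (ζ : ℂ) (hζ : ζ = 1 ∨ ζ = -1) (X : Matrix (Fin n) (Fin n) ℂ) {k : ℕ} (hk : k ≤ n) :
    kyFan (((1:ℂ)/2) • (X + ζ • (U * X * Uᴴ))) k ≤ kyFan X k := by
  set M : Matrix (Fin n) (Fin n) ℂ := ((1:ℂ)/2) • (X + ζ • (U * X * Uᴴ)) with hM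
  have hζs : star ζ = ζ := by rcases hζ with rfl | rfl <;> simp
  have hζ2 : ζ * ζ = 1 := by rcases hζ with rfl | rfl <;> norm_num
  obtain ⟨s, x, y, hcard, hF, hval⟩ := exists_frame M hk
  set x' : Fin n → Fin n → ℂ := fun i => ζ • (Uᴴ *ᵥ x i) with hx'
  set y' : Fin n → Fin n → ℂ := fun i => Uᴴ *ᵥ y i with hy'
  have hF' : Frame s x' y' := by
    intro i hi j hj
    rw [hx', hy']
    dsimp only
    rw [ip_smul_left, ip_smul_right, hζs, ← mul_assoc, hζ2, one_mul,
      huni_ip U hUU, huni_ip U hUU]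
    exact hF i hi j hj
  have hterm : ∀ i ∈ s, 2 * (ip (x i) (M *ᵥ y i)).re
      = (2:ℝ)⁻¹ * (2 * (ip (x i) (X *ᵥ y i)).re)
        + (2:ℝ)⁻¹ * (2 * (ip (x' i) (X *ᵥ y' i)).re) := by
    intro i _
    have h1 : M *ᵥ y i = ((1:ℂ)/2) • ((X *ᵥ y i) + ζ • (U *ᵥ (X *ᵥ (Uᴴ *ᵥ y i)))) := by
      rw [hM, Matrix.smul_mulVec, Matrix.add_mulVec, Matrix.smul_mulVec]
      rw [← Matrix.mulVec_mulVec, ← Matrix.mulVec_mulVec]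
    have h2 : ip (x i) (M *ᵥ y i)
        = ((1:ℂ)/2) * (ip (x i) (X *ᵥ y i) + ip (x' i) (X *ᵥ y' i)) := by
      have e1 : ip (x' i) (X *ᵥ y' i) = ζ * ip (Uᴴ *ᵥ x i) (X *ᵥ (Uᴴ *ᵥ y i)) := by
        rw [hx', hy']
        dsimp only
        rw [ip_smul_left, hζs]
      rw [h1, ip_smul_right, ip_add_right, ip_smul_right,
        ip_U_right U (x i) (X *ᵥ (Uᴴ *ᵥ y i)), e1]
    rw [h2, show ((1:ℂ)/2) = (((1:ℝ)/2 : ℝ) : ℂ) by norm_num, Complex.re_ofReal_mul,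
      Complex.add_re]
    ring
  have b1 := frame_sum_le X hF
  have b2 := frame_sum_le X hF'
  rw [hcard] at b1 b2
  have hsplit : ∑ i ∈ s, 2 * (ip (x i) (M *ᵥ y i)).re
      = (2:ℝ)⁻¹ * (∑ i ∈ s, 2 * (ip (x i) (X *ᵥ y i)).re)
        + (2:ℝ)⁻¹ * (∑ i ∈ s, 2 * (ip (x' i) (X *ᵥ y' i)).re) := by
    rw [Finset.sum_congr rfl hterm, Finset.sum_add_distrib, Finset.mul_sum, Finset.mul_sum]
  rw [← hval, hsplit]
  linarith

end
end DiscAux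

namespace DiscAux
variable {n : ℕ}

lemma conj_scalar (U : Matrix (Fin n) (Fin n) ℂ) (hUU : U * Uᴴ = 1) (α : ℂ) :
    U * (α • (1 : Matrix (Fin n) (Fin n) ℂ)) * Uᴴ = α • 1 := by
  rw [Matrix.mul_smul, Matrix.smul_mul, Matrix.mul_one, hUU]

lemma pinch_identity (A U : Matrix (Fin n) (Fin n) ℂ) (hUU : U * Uᴴ = 1) (α : ℂ) :
    ((1:ℂ)/2) • (A + U * A * Uᴴ) - α • (1 : Matrix (Fin n) (Fin n) ℂ)
      = ((1:ℂ)/2) • ((A - α • 1) + (1:ℂ) • (U * (A - α • 1) * Uᴴ)) := by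
  have h : U * (A - α • 1) * Uᴴ = U * A * Uᴴ - α • 1 := by
    rw [Matrix.mul_sub, Matrix.sub_mul, conj_scalar U hUU]
  rw [h, one_smul]
  module

lemma anti_identity (A U : Matrix (Fin n) (Fin n) ℂ) (hUU : U * Uᴴ = 1) (α : ℂ) :
    ((1:ℂ)/2) • ((A - α • 1) + (-1:ℂ) • (U * (A - α • 1) * Uᴴ))
      = ((1:ℂ)/2) • (A - U * A * Uᴴ) := by
  have h : U * (A - α • 1) * Uᴴ = U * A * Uᴴ - α • 1 := by
    rw [Matrix.mul_sub, Matrix.sub_mul, conj_scalar U hUU]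
  rw [h]
  module

lemma discNorm_pinch_le (A U : Matrix (Fin n) (Fin n) ℂ) (hUU : U * Uᴴ = 1)
    {k : ℕ} (hk : k ≤ n) :
    discNorm (((1:ℂ)/2) • (A + U * A * Uᴴ)) k ≤ discNorm A k := by
  refine le_csInf (discSet_nonempty A k) ?_
  rintro b ⟨α, rfl⟩
  calc discNorm (((1:ℂ)/2) • (A + U * A * Uᴴ)) k
      ≤ kyFan ((((1:ℂ)/2) • (A + U * A * Uᴴ)) - α • 1) k := discNorm_le _ _ _
    _ = kyFan (((1:ℂ)/2) • ((A - α • 1) + (1:ℂ) • (U * (A - α • 1) * Uᴴ))) k := by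
        rw [pinch_identity A U hUU]
    _ ≤ kyFan (A - α • 1) k := kyFan_sign_le U hUU 1 (Or.inl rfl) _ hk

lemma discNorm_anti_le (A U : Matrix (Fin n) (Fin n) ℂ) (hUU : U * Uᴴ = 1)
    {k : ℕ} (hk : k ≤ n) :
    discNorm (((1:ℂ)/2) • (A - U * A * Uᴴ)) k ≤ discNorm A k := by
  refine le_csInf (discSet_nonempty A k) ?_
  rintro b ⟨α, rfl⟩
  calc discNorm (((1:ℂ)/2) • (A - U * A * Uᴴ)) k
      ≤ kyFan ((((1:ℂ)/2) • (A - U * A * Uᴴ)) - (0:ℂ) • 1) k := discNorm_le _ 0 _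
    _ = kyFan (((1:ℂ)/2) • (A - U * A * Uᴴ)) k := by rw [zero_smul, sub_zero]
    _ = kyFan (((1:ℂ)/2) • ((A - α • 1) + (-1:ℂ) • (U * (A - α • 1) * Uᴴ))) k := by
        rw [anti_identity A U hUU α]
    _ ≤ kyFan (A - α • 1) k := kyFan_sign_le U hUU (-1) (Or.inr rfl) _ hk

end DiscAux


/-- Pinching and anti-pinching decrease discrepancy values in weak majorization. -/
theorem discVals_pinching (n : ℕ) (A U : Matrix (Fin n) (Fin n) ℂ)
    (hU : U ∈ Matrix.unitaryGroup (Fin n) ℂ) :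
    WeakMaj (discVals (((1 : ℂ)/2) • (A + U * A * Uᴴ))) (discVals A)
    ∧ WeakMaj (discVals (((1 : ℂ)/2) • (A - U * A * Uᴴ))) (discVals A) := by
  have hUU : U * Uᴴ = 1 := by
    have := Matrix.mem_unitaryGroup_iff.mp hU
    rwa [Matrix.star_eq_conjTranspose] at this
  constructor
  · exact DiscAux.weakMaj_of_discNorm_le fun k hk => DiscAux.discNorm_pinch_le A U hUU hk
  · exact DiscAux.weakMaj_of_discNorm_le fun k hk => DiscAux.discNorm_anti_le A U hUU hk
end

section
/- For any n×n Hermitian matrix X, δ(e^{iX}) ≺_w σ(X), where e^{iX} is the matrix exponential. -/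
open scoped InnerProductSpace ComplexOrder Matrix

section SumK
variable {n : ℕ} {f g : Fin n → ℝ} {k : ℕ}

lemma bddAbove_sumK (f : Fin n → ℝ) (k : ℕ) :
    BddAbove {x | ∃ s : Finset (Fin n), s.card = k ∧ x = ∑ i ∈ s, f i} :=
  ((Set.finite_range (fun s : Finset (Fin n) => ∑ i ∈ s, f i)).subset
    (by rintro x ⟨s, _, rfl⟩; exact ⟨s, rfl⟩)).bddAbove

lemma le_sumK {s : Finset (Fin n)} (hs : s.card = k) : ∑ i ∈ s, f i ≤ sumK f k :=
  le_csSup (bddAbove_sumK f k) ⟨s, hs, rfl⟩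

lemma sumK_le {c : ℝ} (hk : k ≤ n) (h : ∀ s : Finset (Fin n), s.card = k → ∑ i ∈ s, f i ≤ c) :
    sumK f k ≤ c := by
  obtain ⟨s, _, hs⟩ := Finset.exists_subset_card_eq
    (show k ≤ (Finset.univ : Finset (Fin n)).card by simpa using hk)
  exact csSup_le ⟨_, s, hs, rfl⟩ (by rintro x ⟨t, ht, rfl⟩; exact h t ht)

lemma sumK_zero : sumK f 0 = 0 := by
  have : {x | ∃ s : Finset (Fin n), s.card = 0 ∧ x = ∑ i ∈ s, f i} = {0} := by
    ext x
    constructor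
    · rintro ⟨s, hs, rfl⟩
      simp [Finset.card_eq_zero.mp hs]
    · rintro rfl
      exact ⟨∅, by simp⟩
  rw [sumK, this, csSup_singleton]

lemma sumK_of_gt (h : n < k) : sumK f k = 0 := by
  have : {x | ∃ s : Finset (Fin n), s.card = k ∧ x = ∑ i ∈ s, f i} = ∅ := by
    ext x
    simp only [Set.mem_setOf_eq, Set.mem_empty_iff_false, iff_false, not_exists]
    rintro s ⟨hs, -⟩
    have := Finset.card_le_univ s
    simp only [Finset.card_univ, Fintype.card_fin] at this
    omega
  rw [sumK, this, Real.sSup_empty]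

lemma sumK_nonneg (hf : ∀ i, 0 ≤ f i) (k : ℕ) : 0 ≤ sumK f k := by
  rcases le_or_gt k n with hk | hk
  · obtain ⟨s, _, hs⟩ := Finset.exists_subset_card_eq
      (show k ≤ (Finset.univ : Finset (Fin n)).card by simpa using hk)
    exact (Finset.sum_nonneg fun i _ => hf i).trans (le_sumK hs)
  · rw [sumK_of_gt hk]

lemma sumK_le_sumK_perm (σ : Equiv.Perm (Fin n)) (h : ∀ i, f i ≤ g (σ i)) (k : ℕ) :
    sumK f k ≤ sumK g k := by
  rcases le_or_gt k n with hk | hk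
  · refine sumK_le hk fun s hs => ?_
    calc ∑ i ∈ s, f i ≤ ∑ i ∈ s, g (σ i) := Finset.sum_le_sum fun i _ => h i
      _ = ∑ j ∈ s.image σ, g j := (Finset.sum_image (by simp [σ.injective.eq_iff])).symm
      _ ≤ sumK g k := le_sumK (by rw [Finset.card_image_of_injective _ σ.injective, hs])
  · rw [sumK_of_gt hk, sumK_of_gt hk]

lemma sumK_mono_len (hf : ∀ i, 0 ≤ f i) (hk : k + 1 ≤ n) : sumK f k ≤ sumK f (k + 1) := by
  refine sumK_le (by omega) fun s hs => ?_
  have hne : s ≠ Finset.univ := by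
    intro e
    rw [e, Finset.card_univ, Fintype.card_fin] at hs
    omega
  obtain ⟨x, -, hx⟩ := Finset.exists_of_ssubset (Finset.ssubset_univ_iff.mpr hne)
  calc ∑ i ∈ s, f i ≤ ∑ i ∈ insert x s, f i := by
        rw [Finset.sum_insert hx]; nlinarith [hf x]
    _ ≤ sumK f (k + 1) := le_sumK (by rw [Finset.card_insert_of_notMem hx, hs])

lemma sumK_concave (hk : k + 2 ≤ n) :
    sumK f (k + 2) + sumK f k ≤ 2 * sumK f (k + 1) := by
  have key : ∀ s t : Finset (Fin n), s.card = k + 2 → t.card = k →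
      ∑ i ∈ s, f i + ∑ i ∈ t, f i ≤ sumK f (k + 1) + sumK f (k + 1) := by
    intro s t hs ht
    have hsub : ¬ s ⊆ t := fun hsub => by have := Finset.card_le_card hsub; omega
    obtain ⟨x, hxs, hxt⟩ := Finset.not_subset.mp hsub
    have h1 : ∑ i ∈ s.erase x, f i + f x = ∑ i ∈ s, f i := Finset.sum_erase_add s f hxs
    have h2 : ∑ i ∈ insert x t, f i = f x + ∑ i ∈ t, f i := Finset.sum_insert hxt
    have c1 : (s.erase x).card = k + 1 := by rw [Finset.card_erase_of_mem hxs, hs]; rfl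
    have c2 : (insert x t).card = k + 1 := by rw [Finset.card_insert_of_notMem hxt, ht]
    have l1 := le_sumK (f := f) c1
    have l2 := le_sumK (f := f) c2
    linarith
  have inner : ∀ s : Finset (Fin n), s.card = k + 2 →
      ∑ i ∈ s, f i + sumK f k ≤ 2 * sumK f (k + 1) := by
    intro s hs
    have : sumK f k ≤ 2 * sumK f (k + 1) - ∑ i ∈ s, f i :=
      sumK_le (by omega) fun t ht => by linarith [key s t hs ht]
    linarith
  have : sumK f (k + 2) ≤ 2 * sumK f (k + 1) - sumK f k :=
    sumK_le (by omega) fun s hs => by linarith [inner s hs]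
  linarith

lemma le_val_strictMono {k : ℕ} {u : Fin k → Fin n} (hu : StrictMono u) (j : Fin k) :
    (j : ℕ) ≤ (u j : ℕ) := by
  obtain ⟨m, hm⟩ := j
  induction m with
  | zero => simp
  | succ m ih =>
    have hm' : m < k := by omega
    have hlt : (⟨m, hm'⟩ : Fin k) < ⟨m + 1, hm⟩ := by simp [Fin.lt_def]
    have h2 := hu hlt
    have h3 := ih hm'
    simp only [Fin.lt_def, Fin.val_mk] at h2 h3 hlt ⊢
    omega

lemma sum_le_sum_head (hf : Antitone f) (s : Finset (Fin n)) (h : s.card ≤ n) :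
    ∑ i ∈ s, f i ≤ ∑ j : Fin s.card, f (Fin.castLE h j) := by
  classical
  set e := s.orderIsoOfFin rfl with he
  have h1 : ∑ i ∈ s, f i = ∑ j : Fin s.card, f (e j) := by
    rw [← Finset.sum_coe_sort s f]
    exact (Equiv.sum_comp e.toEquiv (fun i => f i)).symm
  rw [h1]
  refine Finset.sum_le_sum fun j _ => hf ?_
  have hsm : StrictMono (fun j : Fin s.card => ((e j : Fin n))) := by
    intro a b hab
    exact e.strictMono hab
  have := le_val_strictMono hsm j
  exact Fin.mk_le_of_le_val this
end SumK

section Disc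
variable {n : ℕ} {A : Matrix (Fin n) (Fin n) ℂ} {k : ℕ}

lemma singVals_nonneg (A : Matrix (Fin n) (Fin n) ℂ) (i : Fin n) : 0 ≤ singVals A i :=
  Real.sqrt_nonneg _

lemma kyFan_nonneg (A : Matrix (Fin n) (Fin n) ℂ) (k : ℕ) : 0 ≤ kyFan A k :=
  sumK_nonneg (singVals_nonneg A) k

lemma discNorm_set_nonempty (A : Matrix (Fin n) (Fin n) ℂ) (k : ℕ) :
    {x | ∃ α : ℂ, x = kyFan (A - α • 1) k}.Nonempty := ⟨_, 0, rfl⟩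

lemma discNorm_set_bddBelow (A : Matrix (Fin n) (Fin n) ℂ) (k : ℕ) :
    BddBelow {x | ∃ α : ℂ, x = kyFan (A - α • 1) k} :=
  ⟨0, by rintro x ⟨α, rfl⟩; exact kyFan_nonneg _ _⟩

lemma discNorm_le (α : ℂ) : discNorm A k ≤ kyFan (A - α • 1) k :=
  csInf_le (discNorm_set_bddBelow A k) ⟨α, rfl⟩

lemma le_discNorm {c : ℝ} (h : ∀ α : ℂ, c ≤ kyFan (A - α • 1) k) : c ≤ discNorm A k :=
  le_csInf (discNorm_set_nonempty A k) (by rintro x ⟨α, rfl⟩; exact h α)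

lemma discNorm_nonneg : 0 ≤ discNorm A k := le_discNorm fun α => kyFan_nonneg _ _

lemma discNorm_zero : discNorm A 0 = 0 :=
  le_antisymm ((discNorm_le 0).trans_eq sumK_zero) discNorm_nonneg

lemma discNorm_mono (h : k + 1 ≤ n) : discNorm A k ≤ discNorm A (k + 1) :=
  le_discNorm fun α => (discNorm_le α).trans (sumK_mono_len (singVals_nonneg _) h)

lemma discNorm_concave (h : k + 2 ≤ n) :
    discNorm A (k + 2) + discNorm A k ≤ 2 * discNorm A (k + 1) := by
  have step : ∀ α : ℂ, (discNorm A (k + 2) + discNorm A k) / 2 ≤ kyFan (A - α • 1) (k + 1) := by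
    intro α
    have h1 := discNorm_le (A := A) (k := k + 2) α
    have h2 := discNorm_le (A := A) (k := k) α
    have h3 := sumK_concave (f := singVals (A - α • 1)) h
    simp only [kyFan] at h1 h2 ⊢
    linarith
  have := le_discNorm step
  linarith

lemma discVals_step_antitone : ∀ a b : ℕ, a ≤ b → b + 1 ≤ n →
    discNorm A (b + 1) - discNorm A b ≤ discNorm A (a + 1) - discNorm A a := by
  intro a b hab
  induction b, hab using Nat.le_induction with
  | base => intro _; exact le_rfl
  | succ b hab ih =>
    intro hb
    have h1 := discNorm_concave (A := A) (k := b) (by omega)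
    have h2 := ih (by omega)
    linarith

lemma discVals_antitone : Antitone (discVals A) := by
  intro i j hij
  exact discVals_step_antitone i.1 j.1 hij (by omega)

lemma sumK_discVals_le (hk : k ≤ n) : sumK (discVals A) k ≤ discNorm A k := by
  refine sumK_le hk fun s hs => ?_
  have h1 : s.card ≤ n := by
    have := Finset.card_le_univ s
    simpa using this
  calc ∑ i ∈ s, discVals A i ≤ ∑ j : Fin s.card, discVals A (Fin.castLE h1 j) :=
        sum_le_sum_head discVals_antitone s h1
    _ = ∑ j ∈ Finset.range s.card, (discNorm A (j + 1) - discNorm A j) := by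
        simp only [discVals, Fin.coe_castLE]
        rw [Fin.sum_univ_eq_sum_range (fun j => discNorm A (j + 1) - discNorm A j) s.card]
    _ = discNorm A s.card - discNorm A 0 := Finset.sum_range_sub (fun j => discNorm A j) s.card
    _ = discNorm A k := by rw [discNorm_zero, hs, sub_zero]
end Disc

section PermMultiset
variable {α : Type*}

lemma exists_comp_perm_eq : ∀ {m : ℕ} (f g : Fin m → α),
    Multiset.map f Finset.univ.val = Multiset.map g Finset.univ.val →
    ∃ σ : Equiv.Perm (Fin m), f = g ∘ σ := by
  intro m
  induction m with
  | zero => exact fun f g _ => ⟨1, funext fun i => i.elim0⟩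
  | succ m ih =>
    intro f g hfg
    have decomp : ∀ (h : Fin (m+1) → α), Multiset.map h Finset.univ.val
        = h 0 ::ₘ Multiset.map (h ∘ Fin.succ) Finset.univ.val := by
      intro h
      rw [Fin.univ_succ]
      simp only [Finset.cons_val, Multiset.map_cons, Finset.map_val, Multiset.map_map]
      rfl
    have hmem : f 0 ∈ Multiset.map g Finset.univ.val := by
      rw [← hfg, decomp f]; exact Multiset.mem_cons_self _ _
    obtain ⟨j, -, hj⟩ := Multiset.mem_map.mp hmem
    set g' : Fin (m+1) → α := g ∘ (Equiv.swap 0 j) with hg'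
    have hg0 : g' 0 = f 0 := by simp [hg', Equiv.swap_apply_left, hj]
    have hmaps : Multiset.map g' Finset.univ.val = Multiset.map g Finset.univ.val := by
      calc Multiset.map g' Finset.univ.val
          = Multiset.map g (Multiset.map (⇑(Equiv.swap 0 j)) Finset.univ.val) := by
            rw [Multiset.map_map]
        _ = Multiset.map g Finset.univ.val := by
            rw [Multiset.map_univ_val_equiv]
    have htails : Multiset.map (f ∘ Fin.succ) Finset.univ.val
        = Multiset.map (g' ∘ Fin.succ) Finset.univ.val := by
      have h1 : Multiset.map f Finset.univ.val = Multiset.map g' Finset.univ.val := by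
        rw [hfg, hmaps]
      rw [decomp f, decomp g', hg0] at h1
      exact (Multiset.cons_inj_right _).mp h1
    obtain ⟨τ, hτ⟩ := ih (f ∘ Fin.succ) (g' ∘ Fin.succ) htails
    refine ⟨(Equiv.Perm.decomposeFin.symm (0, τ)).trans (Equiv.swap 0 j), funext fun i => ?_⟩
    induction i using Fin.cases with
    | zero =>
      simp only [Function.comp_apply, Equiv.trans_apply,
        Equiv.Perm.decomposeFin_symm_apply_zero, Equiv.swap_apply_left]
      exact hj.symm
    | succ i =>
      have := congrFun hτ i
      simp only [Function.comp_apply] at this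
      simp only [Function.comp_apply, Equiv.trans_apply,
        Equiv.Perm.decomposeFin_symm_apply_succ, Equiv.swap_self, Equiv.refl_apply]
      rw [this, hg']
      simp [Function.comp_apply]
end PermMultiset

section Charpoly
open Polynomial
variable {n : ℕ}

lemma charpoly_unitary_conj (U M : Matrix (Fin n) (Fin n) ℂ)
    (hU : U ∈ Matrix.unitaryGroup (Fin n) ℂ) :
    (U * M * star U).charpoly = M.charpoly := by
  have hU1 : U * star U = 1 := Matrix.mem_unitaryGroup_iff.mp hU
  have hmap1 : U.map C * (star U).map C = 1 := by
    rw [← Matrix.map_mul, hU1, Matrix.map_one _ (map_zero C) (map_one C)]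
  have hscal : U.map C * Matrix.scalar (Fin n) (X : ℂ[X]) * (star U).map C
      = Matrix.scalar (Fin n) (X : ℂ[X]) := by
    rw [← (Matrix.scalar_commute (X : ℂ[X]) (Commute.all X) (U.map C)).eq,
      mul_assoc, hmap1, mul_one]
  have hch : (U * M * star U).charmatrix = U.map C * M.charmatrix * (star U).map C := by
    unfold Matrix.charmatrix
    simp only [RingHom.mapMatrix_apply]
    rw [Matrix.map_mul, Matrix.map_mul, mul_sub, sub_mul, hscal]
  rw [Matrix.charpoly, Matrix.charpoly, hch, Matrix.det_mul, Matrix.det_mul]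
  have hdet : (U.map C).det * ((star U).map C).det = 1 := by
    rw [← Matrix.det_mul, hmap1, Matrix.det_one]
  calc (U.map C).det * M.charmatrix.det * ((star U).map C).det
      = M.charmatrix.det * ((U.map C).det * ((star U).map C).det) := by ring
    _ = M.charmatrix.det := by rw [hdet, mul_one]

lemma charpoly_diagonal (v : Fin n → ℂ) :
    (Matrix.diagonal v).charpoly = ∏ i, (X - C (v i)) := by
  rw [Matrix.charpoly_of_upperTriangular _ (Matrix.blockTriangular_diagonal v)]
  simp

lemma roots_prod_X_sub_C' (c : Fin n → ℂ) :
    (∏ i, (X - C (c i))).roots = Multiset.map c Finset.univ.val := by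
  have h : ∏ i, (X - C (c i)) = ((Multiset.map c Finset.univ.val).map (fun a => X - C a)).prod := by
    rw [Multiset.map_map]
    rfl
  rw [h, roots_multiset_prod_X_sub_C]

lemma eig_perm (A : Matrix (Fin n) (Fin n) ℂ) (hA : A.IsHermitian)
    (U : Matrix (Fin n) (Fin n) ℂ) (hU : U ∈ Matrix.unitaryGroup (Fin n) ℂ)
    (d : Fin n → ℝ) (h : A = U * Matrix.diagonal (fun i => (d i : ℂ)) * star U) :
    ∃ σ : Equiv.Perm (Fin n), hA.eigenvalues = d ∘ σ := by
  have h1 : A.charpoly = ∏ i, (X - C ((d i : ℂ))) := by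
    rw [h, charpoly_unitary_conj _ _ hU, charpoly_diagonal]
  have h2 : A.charpoly = ∏ i, (X - C ((hA.eigenvalues i : ℂ))) := by
    conv_lhs => rw [hA.spectral_theorem, Unitary.conjStarAlgAut_apply]
    rw [charpoly_unitary_conj _ _ hA.eigenvectorUnitary.2, charpoly_diagonal]
    rfl
  have h3 : Multiset.map (fun i => ((d i : ℂ))) Finset.univ.val
      = Multiset.map (fun i => ((hA.eigenvalues i : ℂ))) Finset.univ.val := by
    rw [← roots_prod_X_sub_C' (fun i => ((d i : ℂ))),
      ← roots_prod_X_sub_C' (fun i => ((hA.eigenvalues i : ℂ))), ← h1, ← h2]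
  have h4 : Multiset.map d Finset.univ.val = Multiset.map hA.eigenvalues Finset.univ.val := by
    apply Multiset.map_injective (f := (Complex.ofReal : ℝ → ℂ)) Complex.ofReal_injective
    simpa [Multiset.map_map, Function.comp_def] using h3
  obtain ⟨σ, hσ⟩ := exists_comp_perm_eq hA.eigenvalues d h4.symm
  exact ⟨σ, hσ⟩
end Charpoly

section Final
variable {n : ℕ}

lemma abs_exp_I_mul_sub_one_le (t : ℝ) :
    ‖Complex.exp (Complex.I * t) - 1‖ ≤ |t| := by
  have h2 : Complex.normSq (Complex.exp (Complex.I * t) - 1)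
      = (Real.cos t - 1) ^ 2 + Real.sin t ^ 2 := by
    rw [mul_comm, Complex.exp_mul_I]
    simp [Complex.normSq_apply, Complex.cos_ofReal_re, Complex.sin_ofReal_re,
      Complex.cos_ofReal_im, Complex.sin_ofReal_im]
    ring
  have h3 : (Real.cos t - 1) ^ 2 + Real.sin t ^ 2 ≤ t ^ 2 := by
    have hc := Real.one_sub_sq_div_two_le_cos (x := t)
    have hs := Real.sin_sq_add_cos_sq t
    have hc1 := Real.cos_le_one t
    nlinarith
  calc ‖Complex.exp (Complex.I * t) - 1‖
      = Real.sqrt ((Real.cos t - 1) ^ 2 + Real.sin t ^ 2) := by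
        rw [Complex.norm_def, h2]
    _ ≤ Real.sqrt (t ^ 2) := Real.sqrt_le_sqrt h3
    _ = |t| := Real.sqrt_sq_eq_abs t

lemma conj_conjTranspose_mul_self (U : Matrix (Fin n) (Fin n) ℂ)
    (hU2 : star U * U = 1) (w : Fin n → ℂ) :
    (U * Matrix.diagonal w * star U)ᴴ * (U * Matrix.diagonal w * star U)
      = U * Matrix.diagonal (fun i => ((Complex.normSq (w i) : ℝ) : ℂ)) * star U := by
  have h1 : (U * Matrix.diagonal w * star U)ᴴ = U * Matrix.diagonal (star w) * star U := by
    rw [Matrix.conjTranspose_mul, Matrix.conjTranspose_mul, Matrix.diagonal_conjTranspose,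
      Matrix.star_eq_conjTranspose, Matrix.conjTranspose_conjTranspose, ← Matrix.mul_assoc]
  rw [h1]
  have h2 : U * Matrix.diagonal (star w) * star U * (U * Matrix.diagonal w * star U)
      = U * (Matrix.diagonal (star w) * Matrix.diagonal w) * star U := by
    calc U * Matrix.diagonal (star w) * star U * (U * Matrix.diagonal w * star U)
        = U * (Matrix.diagonal (star w) * ((star U * U) * (Matrix.diagonal w * star U))) := by
          simp only [Matrix.mul_assoc]
      _ = _ := by rw [hU2, Matrix.one_mul]; simp only [Matrix.mul_assoc]
  have h3 : (fun i => star w i * w i) = (fun i => ((Complex.normSq (w i) : ℝ) : ℂ)) := by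
    funext i
    simp only [Pi.star_apply, Complex.star_def]
    rw [mul_comm, Complex.mul_conj]
  rw [h2, Matrix.diagonal_mul_diagonal, h3]

lemma singVals_perm (B : Matrix (Fin n) (Fin n) ℂ) (U : Matrix (Fin n) (Fin n) ℂ)
    (hU : U ∈ Matrix.unitaryGroup (Fin n) ℂ) (c : Fin n → ℝ)
    (h : Bᴴ * B = U * Matrix.diagonal (fun i => (c i : ℂ)) * star U) :
    ∃ σ : Equiv.Perm (Fin n), ∀ i, singVals B i = Real.sqrt (c (σ i)) := by
  obtain ⟨σ, hσ⟩ := eig_perm (Bᴴ * B) (Matrix.posSemidef_conjTranspose_mul_self B).1 U hU c h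
  exact ⟨σ, fun i => by rw [singVals, congrFun hσ i]; rfl⟩

lemma exp_I_smul (X : Matrix (Fin n) (Fin n) ℂ) (hX : X.IsHermitian) :
    NormedSpace.exp (Complex.I • X)
      = (hX.eigenvectorUnitary : Matrix (Fin n) (Fin n) ℂ)
        * Matrix.diagonal (fun i => Complex.exp (Complex.I * (hX.eigenvalues i : ℂ)))
        * star (hX.eigenvectorUnitary : Matrix (Fin n) (Fin n) ℂ) := by
  set U : Matrix (Fin n) (Fin n) ℂ := (hX.eigenvectorUnitary : Matrix (Fin n) (Fin n) ℂ) with hUdef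
  have hU1 : U * star U = 1 := Matrix.mem_unitaryGroup_iff.mp hX.eigenvectorUnitary.2
  have hU2 : star U * U = 1 := Matrix.mem_unitaryGroup_iff'.mp hX.eigenvectorUnitary.2
  set u : (Matrix (Fin n) (Fin n) ℂ)ˣ := ⟨U, star U, hU1, hU2⟩ with hu
  have hX' : Complex.I • X
      = U * Matrix.diagonal (Complex.I • (fun i => (hX.eigenvalues i : ℂ))) * star U := by
    rw [Matrix.diagonal_smul, mul_smul_comm, smul_mul_assoc]
    congr 1
    conv_lhs => rw [hX.spectral_theorem, Unitary.conjStarAlgAut_apply]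
    rfl
  rw [hX']
  have hconj := Matrix.exp_units_conj u
    (Matrix.diagonal (Complex.I • (fun i => (hX.eigenvalues i : ℂ))))
  have hcoe : (↑u⁻¹ : Matrix (Fin n) (Fin n) ℂ) = star U := rfl
  rw [hcoe] at hconj
  rw [show (↑u : Matrix (Fin n) (Fin n) ℂ) = U from rfl] at hconj
  rw [hconj, Matrix.exp_diagonal]
  have hfun : NormedSpace.exp (Complex.I • fun i => (hX.eigenvalues i : ℂ))
      = fun i => Complex.exp (Complex.I * (hX.eigenvalues i : ℂ)) := by
    rw [Pi.exp_def]
    funext i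
    rw [← Complex.exp_eq_exp_ℂ]
    simp [smul_eq_mul]
  rw [hfun]

end Final

/-- For Hermitian X, δ(e^{iX}) ≺_w σ(X). -/
theorem discVals_exp_I_smul_hermitian (n : ℕ) (X : Matrix (Fin n) (Fin n) ℂ)
    (hX : X.IsHermitian) :
    WeakMaj (discVals (NormedSpace.exp (Complex.I • X))) (singVals X) := by
  intro k
  rcases le_or_gt k n with hk | hk
  · set U : Matrix (Fin n) (Fin n) ℂ := (hX.eigenvectorUnitary : Matrix (Fin n) (Fin n) ℂ)
      with hU
    have hUmem : U ∈ Matrix.unitaryGroup (Fin n) ℂ := hX.eigenvectorUnitary.2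
    have hU1 : U * star U = 1 := Matrix.mem_unitaryGroup_iff.mp hUmem
    have hU2 : star U * U = 1 := Matrix.mem_unitaryGroup_iff'.mp hUmem
    set lam := hX.eigenvalues with hlam
    set A := NormedSpace.exp (Complex.I • X) with hA
    set w : Fin n → ℂ := fun i => Complex.exp (Complex.I * (lam i : ℂ)) - 1 with hw
    have hB : A - (1:ℂ) • 1 = U * Matrix.diagonal w * star U := by
      rw [hA, exp_I_smul X hX, one_smul]
      have h2 : Matrix.diagonal w
          = Matrix.diagonal (fun i => Complex.exp (Complex.I * (lam i : ℂ))) - 1 := by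
        rw [← Matrix.diagonal_one, ← Matrix.diagonal_sub]
      rw [h2, Matrix.mul_sub, Matrix.sub_mul, Matrix.mul_one, hU1]
    have hBconj := conj_conjTranspose_mul_self U hU2 w
    rw [← hB] at hBconj
    obtain ⟨σ, hσ⟩ := singVals_perm (A - (1:ℂ) • 1) U hUmem (fun i => Complex.normSq (w i)) hBconj
    have hsp : X = U * Matrix.diagonal (fun i => ((lam i : ℝ) : ℂ)) * star U := by
      conv_lhs => rw [hX.spectral_theorem, Unitary.conjStarAlgAut_apply]
      rfl
    have hXX : Xᴴ * X = U * Matrix.diagonal (fun i => ((lam i ^ 2 : ℝ) : ℂ)) * star U := by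
      have hXh : Xᴴ = X := hX
      rw [hXh]
      nth_rewrite 1 [hsp]
      nth_rewrite 1 [hsp]
      calc (U * Matrix.diagonal (fun i => ((lam i : ℝ) : ℂ)) * star U)
            * (U * Matrix.diagonal (fun i => ((lam i : ℝ) : ℂ)) * star U)
          = U * (Matrix.diagonal (fun i => ((lam i : ℝ) : ℂ))
              * ((star U * U) * (Matrix.diagonal (fun i => ((lam i : ℝ) : ℂ)) * star U))) := by
            simp only [Matrix.mul_assoc]
        _ = U * (Matrix.diagonal (fun i => ((lam i : ℝ) : ℂ))
              * Matrix.diagonal (fun i => ((lam i : ℝ) : ℂ))) * star U := by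
            rw [hU2, Matrix.one_mul]
            simp only [Matrix.mul_assoc]
        _ = _ := by
            rw [Matrix.diagonal_mul_diagonal]
            have heq : (fun i => ((lam i : ℝ) : ℂ) * ((lam i : ℝ) : ℂ))
                = fun i => ((lam i ^ 2 : ℝ) : ℂ) := by
              funext i
              push_cast
              ring
            rw [heq]
    obtain ⟨τ, hτ⟩ := singVals_perm X U hUmem (fun i => lam i ^ 2) hXX
    have hsB : ∀ i, singVals (A - (1:ℂ) • 1) i = ‖w (σ i)‖ := fun i => by
      rw [hσ i, Complex.norm_def]
    have hsX : ∀ i, singVals X i = |lam (τ i)| := fun i => by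
      rw [hτ i]
      exact Real.sqrt_sq_eq_abs _
    have hdom : ∀ i, singVals (A - (1:ℂ) • 1) i ≤ singVals X ((σ.trans τ.symm) i) := by
      intro i
      have h1 : singVals X ((σ.trans τ.symm) i) = |lam (σ i)| := by
        rw [hsX]
        congr 1
        simp [Equiv.trans_apply]
      rw [hsB i, h1]
      exact abs_exp_I_mul_sub_one_le (lam (σ i))
    calc sumK (discVals A) k ≤ discNorm A k := sumK_discVals_le hk
      _ ≤ kyFan (A - (1:ℂ) • 1) k := discNorm_le 1
      _ = sumK (singVals (A - (1:ℂ) • 1)) k := rfl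
      _ ≤ sumK (singVals X) k := sumK_le_sumK_perm (σ.trans τ.symm) hdom k
  · rw [sumK_of_gt hk, sumK_of_gt hk]
end

section
/- For any square matrix X ∈ M_n(ℂ) and any orthogonal projection P (P = P* = P²), σ(P X (I − P)) ≺_w δ(X). -/
open scoped InnerProductSpace ComplexOrder Matrix

namespace KyFanAux


lemma setFinite {n : ℕ} (f : Fin n → ℝ) (k : ℕ) :
    {x | ∃ s : Finset (Fin n), s.card = k ∧ x = ∑ i ∈ s, f i}.Finite := by
  apply (Set.finite_range (fun s : Finset (Fin n) => ∑ i ∈ s, f i)).subset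
  rintro x ⟨s, -, rfl⟩; exact ⟨s, rfl⟩

lemma le_sumK {n : ℕ} (f : Fin n → ℝ) {k : ℕ} {s : Finset (Fin n)} (hs : s.card = k) :
    ∑ i ∈ s, f i ≤ sumK f k :=
  le_csSup ((setFinite f k).bddAbove) ⟨s, hs, rfl⟩

lemma sumK_exists {n : ℕ} (f : Fin n → ℝ) {k : ℕ} (hk : k ≤ n) :
    ∃ s : Finset (Fin n), s.card = k ∧ sumK f k = ∑ i ∈ s, f i := by
  obtain ⟨s, -, hs⟩ := Finset.exists_subset_card_eq (s := (Finset.univ : Finset (Fin n))) (n := k)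
    (by simpa using hk)
  have hne : {x | ∃ s : Finset (Fin n), s.card = k ∧ x = ∑ i ∈ s, f i}.Nonempty :=
    ⟨∑ i ∈ s, f i, s, hs, rfl⟩
  have := hne.csSup_mem (setFinite f k)
  obtain ⟨s', hs', hx⟩ := this
  exact ⟨s', hs', hx⟩

lemma sumK_of_lt {n : ℕ} (f : Fin n → ℝ) {k : ℕ} (hk : n < k) : sumK f k = 0 := by
  have : {x | ∃ s : Finset (Fin n), s.card = k ∧ x = ∑ i ∈ s, f i} = ∅ := by
    ext x; simp only [Set.mem_setOf_eq, Set.mem_empty_iff_false, iff_false, not_exists]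
    rintro s ⟨hs, -⟩
    exact absurd hs (by have := s.card_le_univ; simp at this; omega)
  rw [sumK, this, Real.sSup_empty]

lemma sumK_zero {n : ℕ} (f : Fin n → ℝ) : sumK f 0 = 0 := by
  have : {x | ∃ s : Finset (Fin n), s.card = 0 ∧ x = ∑ i ∈ s, f i} = {0} := by
    ext x
    simp only [Set.mem_setOf_eq, Set.mem_singleton_iff, Finset.card_eq_zero]
    constructor
    · rintro ⟨s, rfl, rfl⟩; simp
    · rintro rfl; exact ⟨∅, rfl, by simp⟩
  rw [sumK, this, csSup_singleton]

lemma sumK_nonneg {n : ℕ} {f : Fin n → ℝ} (hf : ∀ i, 0 ≤ f i) (k : ℕ) : 0 ≤ sumK f k := by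
  rcases le_or_gt k n with hk | hk
  · obtain ⟨s, hs, hx⟩ := sumK_exists f hk
    rw [hx]; exact Finset.sum_nonneg fun i _ => hf i
  · rw [sumK_of_lt f hk]

/-- LP / exchange lemma: a `[0,1]`-weighted sum with total weight `≤ k` of a nonnegative
vector is at most the sum of the `k` largest entries. -/
lemma weighted_le_sumK {n k : ℕ} (hk : k ≤ n) {f c : Fin n → ℝ} (hf : ∀ j, 0 ≤ f j)
    (hc0 : ∀ j, 0 ≤ c j) (hc1 : ∀ j, c j ≤ 1) (hsum : ∑ j, c j ≤ (k : ℝ)) :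
    ∑ j, c j * f j ≤ sumK f k := by
  rcases Nat.eq_zero_or_pos k with rfl | hkpos
  · have hc : ∀ j ∈ Finset.univ, c j = 0 := by
      intro j _
      have h1 : ∑ j, c j = 0 :=
        le_antisymm (by simpa using hsum) (Finset.sum_nonneg fun j _ => hc0 j)
      exact (Finset.sum_eq_zero_iff_of_nonneg (fun j _ => hc0 j)).1 h1 j (Finset.mem_univ j)
    rw [sumK_zero]
    refine le_of_eq (Finset.sum_eq_zero fun j _ => by rw [hc j (Finset.mem_univ j), zero_mul])
  obtain ⟨s₀, hs₀, hsum₀⟩ := sumK_exists f hk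
  have hs₀ne : s₀.Nonempty := Finset.card_pos.1 (by omega)
  obtain ⟨j₀, hj₀, hj₀min⟩ := s₀.exists_min_image f hs₀ne
  set t := f j₀ with ht
  have ht0 : 0 ≤ t := hf j₀
  -- every entry outside s₀ is ≤ t
  have hout : ∀ j ∉ s₀, f j ≤ t := by
    intro j hj
    by_contra hlt
    push_neg at hlt
    have hins : (insert j (s₀.erase j₀)).card = k := by
      rw [Finset.card_insert_of_notMem (fun h => hj (Finset.erase_subset _ _ h)),
        Finset.card_erase_of_mem hj₀, hs₀]; omega
    have hle := le_sumK f hins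
    rw [Finset.sum_insert (fun h => hj (Finset.erase_subset _ _ h)), hsum₀] at hle
    have heq : f j₀ + ∑ x ∈ s₀.erase j₀, f x = ∑ i ∈ s₀, f i := Finset.add_sum_erase _ f hj₀
    nlinarith
  have key : ∀ j, c j * f j ≤ (if j ∈ s₀ then f j - t else 0) + c j * t := by
    intro j
    by_cases hj : j ∈ s₀
    · simp only [hj, if_pos]
      have h1 : c j * (f j - t) ≤ 1 * (f j - t) :=
        mul_le_mul_of_nonneg_right (hc1 j) (by linarith [hj₀min j hj])
      nlinarith
    · simp only [hj, if_neg, not_false_iff]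
      have : c j * (f j - t) ≤ 0 := mul_nonpos_of_nonneg_of_nonpos (hc0 j) (by linarith [hout j hj])
      nlinarith
  calc ∑ j, c j * f j ≤ ∑ j, ((if j ∈ s₀ then f j - t else 0) + c j * t) :=
        Finset.sum_le_sum fun j _ => key j
    _ = (∑ j ∈ s₀, (f j - t)) + (∑ j, c j) * t := by
        rw [Finset.sum_add_distrib, Finset.sum_ite_mem, Finset.univ_inter, ← Finset.sum_mul]
    _ ≤ (∑ j ∈ s₀, f j - k * t) + k * t := by
        rw [Finset.sum_sub_distrib, Finset.sum_const, hs₀, nsmul_eq_mul]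
        have : (∑ j, c j) * t ≤ (k : ℝ) * t := mul_le_mul_of_nonneg_right hsum ht0
        linarith
    _ = ∑ j ∈ s₀, f j := by ring
    _ = sumK f k := hsum₀.symm


variable {n : ℕ}

local notation "E" => EuclideanSpace ℂ (Fin n)
local notation "T" => Matrix.toEuclideanLin


lemma inner_toLin_left (A : Matrix (Fin n) (Fin n) ℂ) (x y : E) :
    ⟪(T A) x, y⟫_ℂ = ⟪x, (T Aᴴ) y⟫_ℂ := by
  rw [Matrix.toEuclideanLin_conjTranspose_eq_adjoint, LinearMap.adjoint_inner_right]

lemma toLin_mul_apply (M N : Matrix (Fin n) (Fin n) ℂ) (x : E) :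
    (T (M * N)) x = (T M) ((T N) x) := by
  simp [Matrix.toEuclideanLin_apply, Matrix.mulVec_mulVec]

lemma singVals_nonneg (A : Matrix (Fin n) (Fin n) ℂ) (j : Fin n) : 0 ≤ singVals A j :=
  Real.sqrt_nonneg _

lemma sq_singVals (A : Matrix (Fin n) (Fin n) ℂ) (j : Fin n) :
    (singVals A j) ^ 2 = (Matrix.posSemidef_conjTranspose_mul_self A).1.eigenvalues j :=
  Real.sq_sqrt ((Matrix.posSemidef_conjTranspose_mul_self A).eigenvalues_nonneg j)

lemma parseval (b : OrthonormalBasis (Fin n) ℂ E) (x : E) :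
    ∑ j, ‖⟪b j, x⟫_ℂ‖ ^ 2 = ‖x‖ ^ 2 := by
  have h := b.sum_inner_mul_inner x x
  have h2 : ∀ j, ⟪x, b j⟫_ℂ * ⟪b j, x⟫_ℂ = ((‖⟪b j, x⟫_ℂ‖ ^ 2 : ℝ) : ℂ) := fun j => by
    rw [← inner_conj_symm x (b j), RCLike.conj_mul]; norm_cast
  rw [inner_self_eq_norm_sq_to_K] at h
  rw [Finset.sum_congr rfl (fun j _ => h2 j)] at h
  have := congrArg Complex.re h
  simpa [← Complex.ofReal_pow] using this

/-- SVD: orthonormal bases `f`, `e` with `A f j = σ j • e j`. -/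
lemma exists_svd (A : Matrix (Fin n) (Fin n) ℂ) :
    ∃ f e : OrthonormalBasis (Fin n) ℂ E,
      ∀ j, (T A) (f j) = (singVals A j : ℂ) • e j := by
  set hA := (Matrix.posSemidef_conjTranspose_mul_self A).1 with hAdef
  set f := hA.eigenvectorBasis with hf
  have heig : ∀ j : Fin n, (T (Aᴴ * A)) (f j) = (hA.eigenvalues j : ℂ) • f j := by
    intro j
    exact congrArg (WithLp.equiv 2 (Fin n → ℂ)).symm (hA.mulVec_eigenvectorBasis j)
  have hinner : ∀ i j : Fin n, ⟪(T A) (f i), (T A) (f j)⟫_ℂ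
      = if i = j then (((singVals A j : ℝ) : ℂ) ^ 2) else 0 := by
    intro i j
    rw [inner_toLin_left, ← toLin_mul_apply, heig j, inner_smul_right,
      orthonormal_iff_ite.mp f.orthonormal]
    by_cases h : i = j
    · simp only [h, if_pos, mul_one]
      norm_cast
      rw [sq_singVals]
    · simp [h]
  classical
  set s : Set (Fin n) := {j | singVals A j ≠ 0} with hs
  have hv : Orthonormal ℂ (s.restrict (fun j => ((singVals A j : ℝ) : ℂ)⁻¹ • (T A) (f j))) := by
    rw [orthonormal_iff_ite]
    intro i j
    show ⟪((singVals A i : ℝ) : ℂ)⁻¹ • (T A) (f i), ((singVals A j : ℝ) : ℂ)⁻¹ • (T A) (f j)⟫_ℂ = if i = j then 1 else 0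
    rw [inner_smul_left, inner_smul_right, hinner, map_inv₀, Complex.conj_ofReal]
    by_cases h : (i : Fin n) = (j : Fin n)
    · have hij : i = j := Subtype.ext h
      subst hij
      simp only [if_pos]
      have hσ : ((singVals A i : ℝ) : ℂ) ≠ 0 := Complex.ofReal_ne_zero.mpr i.2
      field_simp
    · have hij : i ≠ j := fun e => h (congrArg _ e)
      simp [h, hij]
  obtain ⟨e, he⟩ := hv.exists_orthonormalBasis_extension_of_card_eq
    (by simpa using (finrank_euclideanSpace (𝕜 := ℂ) (ι := Fin n)))
  refine ⟨f, e, fun j => ?_⟩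
  by_cases hj : singVals A j = 0
  · have h0 : ⟪(T A) (f j), (T A) (f j)⟫_ℂ = 0 := by rw [hinner]; simp [hj]
    rw [inner_self_eq_zero.mp h0, hj]
    simp
  · have hej := he j hj
    rw [hej, smul_smul, mul_inv_cancel₀ (Complex.ofReal_ne_zero.mpr hj), one_smul]

/-- Ky Fan-type upper bound -/
lemma re_sum_inner_le {k : ℕ} (hk : k ≤ n) (A : Matrix (Fin n) (Fin n) ℂ)
    {ι : Type} [Fintype ι] (hcard : Fintype.card ι = k) (u v : ι → E)
    (hu : ∀ w : E, ∑ i, ‖⟪u i, w⟫_ℂ‖ ^ 2 ≤ ‖w‖ ^ 2)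
    (hv : ∀ w : E, ∑ i, ‖⟪v i, w⟫_ℂ‖ ^ 2 ≤ ‖w‖ ^ 2) :
    (∑ i, ⟪u i, (T A) (v i)⟫_ℂ).re ≤ sumK (singVals A) k := by
  obtain ⟨f, e, hsvd⟩ := exists_svd A
  set σ : Fin n → ℝ := singVals A with hσ
  have hexp : ∀ x : E, (T A) x = ∑ j, (⟪f j, x⟫_ℂ * (σ j : ℂ)) • e j := by
    intro x
    conv_lhs => rw [← f.sum_repr' x, map_sum]
    refine Finset.sum_congr rfl fun j _ => ?_
    rw [map_smul, hsvd j, smul_smul]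
  set c : Fin n → ℝ := fun j => ∑ i, (‖⟪u i, e j⟫_ℂ‖ ^ 2 + ‖⟪v i, f j⟫_ℂ‖ ^ 2) / 2 with hc
  have hterm : ∀ i, (⟪u i, (T A) (v i)⟫_ℂ).re
      ≤ ∑ j, σ j * ((‖⟪u i, e j⟫_ℂ‖ ^ 2 + ‖⟪v i, f j⟫_ℂ‖ ^ 2) / 2) := by
    intro i
    rw [hexp (v i), inner_sum, Complex.re_sum]
    refine Finset.sum_le_sum fun j _ => ?_
    rw [inner_smul_right]
    have h1 : (⟪f j, v i⟫_ℂ * (σ j : ℂ) * ⟪u i, e j⟫_ℂ).re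
        ≤ ‖⟪f j, v i⟫_ℂ * (σ j : ℂ) * ⟪u i, e j⟫_ℂ‖ := by
      exact Complex.re_le_norm _
    have h2 : ‖⟪f j, v i⟫_ℂ * (σ j : ℂ) * ⟪u i, e j⟫_ℂ‖
        = ‖⟪v i, f j⟫_ℂ‖ * σ j * ‖⟪u i, e j⟫_ℂ‖ := by
      rw [norm_mul, norm_mul, Complex.norm_real, Real.norm_eq_abs,
        abs_of_nonneg (singVals_nonneg A j), norm_inner_symm]
    have h3 : ‖⟪v i, f j⟫_ℂ‖ * σ j * ‖⟪u i, e j⟫_ℂ‖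
        ≤ σ j * ((‖⟪u i, e j⟫_ℂ‖ ^ 2 + ‖⟪v i, f j⟫_ℂ‖ ^ 2) / 2) := by
      nlinarith [singVals_nonneg A j, sq_nonneg (‖⟪v i, f j⟫_ℂ‖ - ‖⟪u i, e j⟫_ℂ‖),
        norm_nonneg (⟪v i, f j⟫_ℂ), norm_nonneg (⟪u i, e j⟫_ℂ)]
    linarith
  have hnormsq : ∀ i, ‖u i‖ ^ 2 ≤ 1 := by
    intro i
    have h := hu (u i)
    have h2 : ‖⟪u i, u i⟫_ℂ‖ ^ 2 ≤ ∑ i', ‖⟪u i', u i⟫_ℂ‖ ^ 2 :=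
      Finset.single_le_sum (f := fun i' => ‖⟪u i', u i⟫_ℂ‖ ^ 2)
        (fun i' _ => by positivity) (Finset.mem_univ i)
    have h3 : ‖⟪u i, u i⟫_ℂ‖ = ‖u i‖ ^ 2 := by
      rw [inner_self_eq_norm_sq_to_K]; simp
    rw [h3] at h2
    nlinarith [norm_nonneg (u i), sq_nonneg (‖u i‖)]
  have hvnormsq : ∀ i, ‖v i‖ ^ 2 ≤ 1 := by
    intro i
    have h := hv (v i)
    have h2 : ‖⟪v i, v i⟫_ℂ‖ ^ 2 ≤ ∑ i', ‖⟪v i', v i⟫_ℂ‖ ^ 2 :=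
      Finset.single_le_sum (f := fun i' => ‖⟪v i', v i⟫_ℂ‖ ^ 2)
        (fun i' _ => by positivity) (Finset.mem_univ i)
    have h3 : ‖⟪v i, v i⟫_ℂ‖ = ‖v i‖ ^ 2 := by
      rw [inner_self_eq_norm_sq_to_K]; simp
    rw [h3] at h2
    nlinarith [norm_nonneg (v i), sq_nonneg (‖v i‖)]
  have hc1 : ∀ j, c j ≤ 1 := by
    intro j
    have hue : ∑ i, ‖⟪u i, e j⟫_ℂ‖ ^ 2 ≤ 1 := by
      have := hu (e j)
      rwa [e.orthonormal.1 j, one_pow] at this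
    have hvf : ∑ i, ‖⟪v i, f j⟫_ℂ‖ ^ 2 ≤ 1 := by
      have := hv (f j)
      rwa [f.orthonormal.1 j, one_pow] at this
    rw [hc]
    simp only
    rw [← Finset.sum_div, Finset.sum_add_distrib]
    linarith
  have hc0 : ∀ j, 0 ≤ c j := fun j => Finset.sum_nonneg fun i _ => by positivity
  have hcsum : ∑ j, c j ≤ (k : ℝ) := by
    have hswap : ∑ j, c j = ∑ i, (∑ j, ‖⟪u i, e j⟫_ℂ‖ ^ 2 + ∑ j, ‖⟪v i, f j⟫_ℂ‖ ^ 2) / 2 := by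
      rw [hc, Finset.sum_comm]
      exact Finset.sum_congr rfl fun i _ => by rw [← Finset.sum_div, Finset.sum_add_distrib]
    rw [hswap]
    have hbound : ∀ i : ι, (∑ j, ‖⟪u i, e j⟫_ℂ‖ ^ 2 + ∑ j, ‖⟪v i, f j⟫_ℂ‖ ^ 2) / 2 ≤ 1 := by
      intro i
      have h1 : ∑ j, ‖⟪u i, e j⟫_ℂ‖ ^ 2 = ‖u i‖ ^ 2 := by
        rw [← parseval e (u i)]
        exact Finset.sum_congr rfl fun j _ => by rw [norm_inner_symm]
      have h2 : ∑ j, ‖⟪v i, f j⟫_ℂ‖ ^ 2 = ‖v i‖ ^ 2 := by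
        rw [← parseval f (v i)]
        exact Finset.sum_congr rfl fun j _ => by rw [norm_inner_symm]
      rw [h1, h2]
      linarith [hnormsq i, hvnormsq i]
    calc ∑ i, (∑ j, ‖⟪u i, e j⟫_ℂ‖ ^ 2 + ∑ j, ‖⟪v i, f j⟫_ℂ‖ ^ 2) / 2
        ≤ ∑ _i : ι, (1 : ℝ) := Finset.sum_le_sum fun i _ => hbound i
      _ = (k : ℝ) := by rw [Finset.sum_const, Finset.card_univ, hcard, nsmul_eq_mul, mul_one]
  calc (∑ i, ⟪u i, (T A) (v i)⟫_ℂ).re = ∑ i, (⟪u i, (T A) (v i)⟫_ℂ).re := Complex.re_sum _ _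
    _ ≤ ∑ i, ∑ j, σ j * ((‖⟪u i, e j⟫_ℂ‖ ^ 2 + ‖⟪v i, f j⟫_ℂ‖ ^ 2) / 2) :=
        Finset.sum_le_sum fun i _ => hterm i
    _ = ∑ j, c j * σ j := by
        rw [Finset.sum_comm]
        refine Finset.sum_congr rfl fun j _ => ?_
        simp_rw [mul_comm (σ j)]
        rw [← Finset.sum_mul]
    _ ≤ sumK σ k := weighted_le_sumK hk (singVals_nonneg A) hc0 hc1 hcsum


lemma proj_norm_sq_le (P : Matrix (Fin n) (Fin n) ℂ) (hP1 : P = Pᴴ) (hP2 : P * P = P) (w : E) :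
    ‖(T P) w‖ ^ 2 ≤ ‖w‖ ^ 2 := by
  have h1 : ⟪(T P) w, (T P) w⟫_ℂ = ⟪w, (T P) w⟫_ℂ := by
    rw [inner_toLin_left, ← hP1, ← toLin_mul_apply, hP2]
  have h2 : (‖(T P) w‖ ^ 2 : ℝ) = (⟪(T P) w, (T P) w⟫_ℂ).re := by
    have := inner_self_eq_norm_mul_norm (𝕜 := ℂ) ((T P) w)
    rw [sq]
    rw [← this]
    rfl
  have h3 : (⟪w, (T P) w⟫_ℂ).re ≤ ‖⟪w, (T P) w⟫_ℂ‖ := by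
    exact Complex.re_le_norm _
  have h4 : ‖⟪w, (T P) w⟫_ℂ‖ ≤ ‖w‖ * ‖(T P) w‖ := norm_inner_le_norm _ _
  have h5 : ‖(T P) w‖ ^ 2 ≤ ‖w‖ * ‖(T P) w‖ := by rw [h2, h1]; linarith
  nlinarith [norm_nonneg ((T P) w), norm_nonneg w, sq_nonneg (‖w‖ - ‖(T P) w‖)]

lemma bessel_sub (b : OrthonormalBasis (Fin n) ℂ E) (s : Finset (Fin n)) (w : E) :
    ∑ i : {x // x ∈ s}, ‖⟪b i, w⟫_ℂ‖ ^ 2 ≤ ‖w‖ ^ 2 := by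
  have horth : Orthonormal ℂ (fun i : {x // x ∈ s} => b i) :=
    b.orthonormal.comp _ Subtype.val_injective
  exact horth.sum_inner_products_le w

/-- Key inequality: Ky Fan sums of a compressed corner are dominated by those of `A`. -/
lemma sumK_corner_le {k : ℕ} (hk : k ≤ n) (A P : Matrix (Fin n) (Fin n) ℂ)
    (hP1 : P = Pᴴ) (hP2 : P * P = P) :
    sumK (singVals (P * A * (1 - P))) k ≤ sumK (singVals A) k := by
  set Q : Matrix (Fin n) (Fin n) ℂ := 1 - P with hQ
  have hQ1 : Q = Qᴴ := by
    rw [hQ, Matrix.conjTranspose_sub, Matrix.conjTranspose_one, ← hP1]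
  have hQ2 : Q * Q = Q := by
    rw [hQ, sub_mul, mul_sub, mul_sub, one_mul, one_mul, mul_one, hP2]
    abel
  set B : Matrix (Fin n) (Fin n) ℂ := P * A * Q with hB
  obtain ⟨f, e, hsvd⟩ := exists_svd B
  obtain ⟨s₀, hs₀, hsum₀⟩ := sumK_exists (singVals B) hk
  set u : {x // x ∈ s₀} → E := fun i => (T P) (e i) with hu_def
  set v : {x // x ∈ s₀} → E := fun i => (T Q) (f i) with hv_def
  have hcard : Fintype.card {x // x ∈ s₀} = k := by rw [Fintype.card_coe, hs₀]
  have hinner : ∀ i : {x // x ∈ s₀}, ⟪u i, (T A) (v i)⟫_ℂ = ((singVals B i : ℝ) : ℂ) := by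
    intro i
    have h1 : ⟪u i, (T A) (v i)⟫_ℂ = ⟪e i, (T B) (f i)⟫_ℂ := by
      rw [hu_def, hv_def]
      simp only
      rw [inner_toLin_left, ← hP1, hB, toLin_mul_apply, toLin_mul_apply]
    rw [h1, hsvd i, inner_smul_right, orthonormal_iff_ite.mp e.orthonormal]
    simp
  have hre : sumK (singVals B) k = (∑ i : {x // x ∈ s₀}, ⟪u i, (T A) (v i)⟫_ℂ).re := by
    rw [hsum₀]
    rw [Finset.sum_congr rfl fun i _ => hinner i, Complex.re_sum]
    simp only [Complex.ofReal_re]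
    rw [Finset.sum_coe_sort s₀ (singVals B)]
  rw [hre]
  apply re_sum_inner_le hk A hcard u v
  · intro w
    have h1 : ∀ i : {x // x ∈ s₀}, ‖⟪u i, w⟫_ℂ‖ = ‖⟪e ↑i, (T P) w⟫_ℂ‖ := by
      intro i
      rw [hu_def]
      simp only
      rw [inner_toLin_left, ← hP1]
    calc ∑ i : {x // x ∈ s₀}, ‖⟪u i, w⟫_ℂ‖ ^ 2
        = ∑ i : {x // x ∈ s₀}, ‖⟪e ↑i, (T P) w⟫_ℂ‖ ^ 2 :=
          Finset.sum_congr rfl fun i _ => by rw [h1 i]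
      _ ≤ ‖(T P) w‖ ^ 2 := bessel_sub e s₀ ((T P) w)
      _ ≤ ‖w‖ ^ 2 := proj_norm_sq_le P hP1 hP2 w
  · intro w
    have h1 : ∀ i : {x // x ∈ s₀}, ‖⟪v i, w⟫_ℂ‖ = ‖⟪f ↑i, (T Q) w⟫_ℂ‖ := by
      intro i
      rw [hv_def]
      simp only
      rw [inner_toLin_left, ← hQ1]
    calc ∑ i : {x // x ∈ s₀}, ‖⟪v i, w⟫_ℂ‖ ^ 2
        = ∑ i : {x // x ∈ s₀}, ‖⟪f ↑i, (T Q) w⟫_ℂ‖ ^ 2 :=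
          Finset.sum_congr rfl fun i _ => by rw [h1 i]
      _ ≤ ‖(T Q) w‖ ^ 2 := bessel_sub f s₀ ((T Q) w)
      _ ≤ ‖w‖ ^ 2 := proj_norm_sq_le Q hQ1 hQ2 w

lemma discNorm_zero (X : Matrix (Fin n) (Fin n) ℂ) : discNorm X 0 = 0 := by
  have : {x | ∃ α : ℂ, x = kyFan (X - α • 1) 0} = {0} := by
    ext x
    simp only [Set.mem_setOf_eq, Set.mem_singleton_iff]
    constructor
    · rintro ⟨α, rfl⟩; rw [kyFan, sumK_zero]
    · rintro rfl; exact ⟨0, by rw [kyFan, sumK_zero]⟩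
  rw [discNorm, this, csInf_singleton]

lemma discNorm_le_sumK_discVals {k : ℕ} (hk : k ≤ n) (X : Matrix (Fin n) (Fin n) ℂ) :
    discNorm X k ≤ sumK (discVals X) k := by
  set s : Finset (Fin n) := Finset.univ.map (Fin.castLEEmb hk) with hs
  have hcard : s.card = k := by rw [hs, Finset.card_map, Finset.card_univ, Fintype.card_fin]
  have htel : ∑ i ∈ s, discVals X i = discNorm X k := by
    rw [hs, Finset.sum_map]
    have h1 : ∑ i : Fin k, discVals X (Fin.castLEEmb hk i)
        = ∑ m ∈ Finset.range k, (discNorm X (m + 1) - discNorm X m) := by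
      rw [Finset.sum_range fun m => discNorm X (m + 1) - discNorm X m]
      rfl
    rw [h1, Finset.sum_range_sub (fun m => discNorm X m), discNorm_zero, sub_zero]
  rw [← htel]
  exact le_sumK (discVals X) hcard

end KyFanAux

/-- For any X and orthogonal projection P, σ(P X (I - P)) ≺_w δ(X). -/
theorem singVals_corner_le_discVals (n : ℕ) (X P : Matrix (Fin n) (Fin n) ℂ)
    (hP1 : P = Pᴴ) (hP2 : P * P = P) :
    WeakMaj (singVals (P * X * (1 - P))) (discVals X) := by
  intro k
  rcases le_or_gt k n with hk | hk
  · have h1 : sumK (singVals (P * X * (1 - P))) k ≤ discNorm X k := by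
      rw [discNorm]
      refine le_csInf ⟨kyFan (X - (0 : ℂ) • 1) k, 0, rfl⟩ ?_
      rintro b ⟨α, rfl⟩
      have hmat : P * (X - α • 1) * (1 - P) = P * X * (1 - P) := by
        have h0 : P * (α • 1) * (1 - P) = 0 := by
          rw [mul_smul_comm, mul_one, smul_mul_assoc, mul_sub, mul_one, hP2, sub_self, smul_zero]
        calc P * (X - α • 1) * (1 - P) = (P * X - P * (α • 1)) * (1 - P) := by
              rw [mul_sub P X (α • 1)]
          _ = P * X * (1 - P) - P * (α • 1) * (1 - P) := by rw [sub_mul]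
          _ = P * X * (1 - P) := by rw [h0, sub_zero]
      rw [kyFan, ← hmat]
      exact KyFanAux.sumK_corner_le hk (X - α • 1) P hP1 hP2
    have h2 : discNorm X k ≤ sumK (discVals X) k := KyFanAux.discNorm_le_sumK_discVals hk X
    linarith
  · rw [KyFanAux.sumK_of_lt _ hk, KyFanAux.sumK_of_lt _ hk]
end
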